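/- arXiv:2104.07498 — 9 statements merged into one kernel-verified Lean document; each statement's English description precedes it below -/
import Mathlib

section
/- Let E and F be Riesz spaces and let T : E → F be a Riesz homomorphism. Then for all x, y ∈ E one has |T(x)| ≤ |T(y)| if and only if there exists w ∈ E with T(w) = 0, |w| ≤ |x| and |x − w| ≤ |y|. -/
/-- For a Riesz homomorphism `T : E → F`: `|T x| ≤ |T y|` iff
there is `w` in the kernel with `|w| ≤ |x|` and `|x - w| ≤ |y|`. -/
theorem stmt_1 {E F : Type*}
    [AddCommGroup E] [Lattice E] [Module ℝ E]
    [CovariantClass E E (· + ·) (· ≤ ·)] [PosSMulMono ℝ E]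
    [AddCommGroup F] [Lattice F] [Module ℝ F]
    [CovariantClass F F (· + ·) (· ≤ ·)] [PosSMulMono ℝ F]
    (T : E →ₗ[ℝ] F) (hT : ∀ x y : E, T (x ⊔ y) = T x ⊔ T y) :
    ∀ x y : E, |T x| ≤ |T y| ↔ ∃ w : E, T w = 0 ∧ |w| ≤ |x| ∧ |x - w| ≤ |y| := by
  have hmono : ∀ a b : E, a ≤ b → T a ≤ T b := by
    intro a b hab
    have h := hT a b
    rw [sup_eq_right.2 hab] at h
    rw [h]; exact le_sup_left
  have habsE : ∀ a : E, |a| = a ⊔ -a := fun a => rfl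
  have habsF : ∀ a : F, |a| = a ⊔ -a := fun a => rfl
  have habs : ∀ a : E, T |a| = |T a| := by
    intro a
    rw [habsE, hT, map_neg, habsF]
  have hinf : ∀ a b : E, T (a ⊓ b) = T a ⊓ T b := by
    intro a b
    have : a ⊓ b = -(-a ⊔ -b) := by rw [neg_sup, neg_neg, neg_neg]
    rw [this, map_neg, hT, map_neg, map_neg, neg_sup, neg_neg, neg_neg]
  intro x y
  constructor
  · intro hxy
    set z : E := (x ⊔ -|y|) ⊓ |y| with hz
    refine ⟨x - z, ?_, ?_, ?_⟩
    · have h1 : -|T y| ≤ T x := neg_le.2 ((neg_le_abs (T x)).trans hxy)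
      have h2 : T x ≤ |T y| := le_trans (le_abs_self _) hxy
      rw [map_sub, hz, hinf, hT, map_neg, habs]
      rw [sup_eq_left.2 h1, inf_eq_left.2 h2, sub_self]
    · -- |x - z| ≤ |x|
      rw [habsE]
      refine sup_le ?_ ?_
      · -- x - z ≤ |x|, i.e. x - |x| ≤ z
        rw [sub_le_iff_le_add, ← sub_le_iff_le_add']
        have h1 : x ⊓ 0 ≤ z := by
          refine le_inf (le_trans inf_le_left le_sup_left) (le_trans inf_le_right (abs_nonneg y))
        refine le_trans ?_ h1
        exact le_inf (sub_le_self x (abs_nonneg x)) (sub_nonpos.2 (le_abs_self x))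
      · -- z - x ≤ |x|
        rw [neg_sub, sub_le_iff_le_add']
        have h2 : z ≤ x ⊔ 0 := le_trans inf_le_left
          (sup_le le_sup_left (le_trans (neg_nonpos.2 (abs_nonneg y)) le_sup_right))
        refine le_trans h2 (sup_le (le_add_of_nonneg_right (abs_nonneg x)) ?_)
        exact neg_le_iff_add_nonneg'.1 (neg_le_abs x)
    · -- |x - (x - z)| = |z| ≤ |y|
      rw [sub_sub_cancel, habsE]
      refine sup_le inf_le_right ?_
      rw [neg_inf, neg_sup, neg_neg]
      exact sup_le (le_trans inf_le_right le_rfl)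
        (le_trans (neg_le_self (abs_nonneg y)) le_rfl)
  · rintro ⟨w, hw0, hw1, hw2⟩
    have hx : T x = T (x - w) := by rw [map_sub, hw0, sub_zero]
    rw [hx, ← habs, ← habs y]
    exact hmono _ _ hw2
end

section
/- Let E and F be Riesz spaces and let T : E → F be a Riesz homomorphism. If B is a projection band of E (a band with E = B ⊕ B^d), then T(B) is a projection band of the Riesz space T(E): T(B) is a band of T(E) and every element of T(E) is the sum of an element of T(B) and an element of T(E) disjoint from every element of T(B). -/
/-- Subadditivity of infimum over nonnegative elements in a lattice-ordered
commutative group. -/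
lemma aux_inf_subadd {α : Type*} [AddCommGroup α] [Lattice α]
    [CovariantClass α α (· + ·) (· ≤ ·)] (a b c : α)
    (ha : 0 ≤ a) (hb : 0 ≤ b) (hc : 0 ≤ c) :
    (a + b) ⊓ c ≤ a ⊓ c + b ⊓ c := by
  have key : a ⊓ c + b ⊓ c = ((a + b) ⊓ (a + c)) ⊓ ((c + b) ⊓ (c + c)) := by
    rw [inf_add, add_inf, add_inf]
  rw [key]
  refine le_inf (le_inf inf_le_left ?_) (le_inf ?_ ?_)
  · exact inf_le_right.trans (le_add_of_nonneg_left ha)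
  · exact inf_le_right.trans (le_add_of_nonneg_right hb)
  · exact inf_le_right.trans (le_add_of_nonneg_left hc)

/-- If `u` and `v` are disjoint then `|v| ≤ |u + v|`. -/
lemma aux_abs_le_abs_add {α : Type*} [AddCommGroup α] [Lattice α]
    [CovariantClass α α (· + ·) (· ≤ ·)] (u v : α) (huv : |u| ⊓ |v| = 0) :
    |v| ≤ |u + v| := by
  have triangle : |v| ≤ |u + v| + |u| := by
    have h := abs_add_le (u + v) (-u)
    rw [abs_neg] at h
    calc |v| = |u + v + -u| := by congr 1; abel
      _ ≤ |u + v| + |u| := h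
  have h0 : |v| = |v| ⊓ (|u + v| + |u|) := (inf_eq_left.mpr triangle).symm
  have h2 : |v| ⊓ (|u + v| + |u|) ≤ |v| ⊓ |u + v| + |v| ⊓ |u| := by
    calc |v| ⊓ (|u + v| + |u|) = (|u + v| + |u|) ⊓ |v| := inf_comm _ _
      _ ≤ |u + v| ⊓ |v| + |u| ⊓ |v| :=
        aux_inf_subadd _ _ _ (abs_nonneg _) (abs_nonneg _) (abs_nonneg _)
      _ = |v| ⊓ |u + v| + |v| ⊓ |u| := by rw [inf_comm |u + v| |v|, inf_comm |u| |v|]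
  have h3 : |v| ⊓ |u| = 0 := by rw [inf_comm]; exact huv
  calc |v| = |v| ⊓ (|u + v| + |u|) := h0
    _ ≤ |v| ⊓ |u + v| + |v| ⊓ |u| := h2
    _ = |v| ⊓ |u + v| := by rw [h3, add_zero]
    _ ≤ |u + v| := inf_le_right


/-- For a Riesz homomorphism `T : E → F`, the image of a projection
band `B` of `E` is a projection band of the range `T(E)`: it is an ideal of
`T(E)`, a band of `T(E)` (closed under suprema, computed relative to `T(E)`, of
its subsets), and every element of `T(E)` is the sum of an element of `T(B)` and
an element of `T(E)` disjoint from every element of `T(B)`. -/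
theorem stmt_7 {E F : Type*}
    [AddCommGroup E] [Lattice E] [Module ℝ E]
    [CovariantClass E E (· + ·) (· ≤ ·)] [PosSMulMono ℝ E]
    [AddCommGroup F] [Lattice F] [Module ℝ F]
    [CovariantClass F F (· + ·) (· ≤ ·)] [PosSMulMono ℝ F]
    (T : E →ₗ[ℝ] F) (hT : ∀ x y : E, T (x ⊔ y) = T x ⊔ T y)
    (B : Submodule ℝ E)
    -- `B` is an ideal of `E`
    (hBideal : ∀ x y : E, |x| ≤ |y| → y ∈ B → x ∈ B)
    -- `B` is a band of `E`
    (hBband : ∀ (D : Set E) (s : E), D ⊆ (B : Set E) → IsLUB D s → s ∈ B)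
    -- `B` is a projection band: `E = B ⊕ Bᵈ`
    (hBproj : ∀ x : E, ∃ x₁ ∈ B, ∃ x₂ : E, (∀ b ∈ B, |x₂| ⊓ |b| = 0) ∧ x = x₁ + x₂) :
    -- `T(B)` is an ideal of `T(E)`
    ((∀ y ∈ LinearMap.range T, ∀ b ∈ B.map T, |y| ≤ |b| → y ∈ B.map T) ∧
    -- `T(B)` is a band of `T(E)`: suprema (relative to `T(E)`) of subsets of
    -- `T(B)` belong to `T(B)`
    (∀ (D : Set F) (s : F), D ⊆ (B.map T : Set F) → s ∈ LinearMap.range T →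
      (∀ d ∈ D, d ≤ s) →
      (∀ u ∈ LinearMap.range T, (∀ d ∈ D, d ≤ u) → s ≤ u) →
      s ∈ B.map T) ∧
    -- every element of `T(E)` decomposes
    (∀ y ∈ LinearMap.range T, ∃ y₁ ∈ B.map T, ∃ y₂ ∈ LinearMap.range T,
      (∀ b ∈ B.map T, |y₂| ⊓ |b| = 0) ∧ y = y₁ + y₂)) := by
  -- `T` is monotone
  have Tmono : ∀ {a b : E}, a ≤ b → T a ≤ T b := by
    intro a b h
    have h1 : T a ⊔ T b = T b := by rw [← hT, sup_eq_right.mpr h]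
    exact sup_eq_right.mp h1
  -- `T` preserves absolute values
  have Tabs : ∀ a : E, T |a| = |T a| := by
    intro a
    show T (a ⊔ -a) = T a ⊔ -(T a)
    rw [hT, map_neg]
  -- `T` preserves infima
  have Tinf : ∀ a b : E, T (a ⊓ b) = T a ⊓ T b := by
    intro a b
    have h1 : a ⊓ b = -(-a ⊔ -b) := by rw [neg_sup, neg_neg, neg_neg]
    rw [h1, map_neg, hT, map_neg, map_neg, neg_sup, neg_neg, neg_neg]
  -- elements disjoint from `B` are closed under addition
  have addDisj : ∀ a b : E, (∀ c ∈ B, |a| ⊓ |c| = 0) → (∀ c ∈ B, |b| ⊓ |c| = 0) →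
      ∀ c ∈ B, |a + b| ⊓ |c| = 0 := by
    intro a b ha hb c hc
    have h1 : |a + b| ⊓ |c| ≤ (|a| + |b|) ⊓ |c| :=
      inf_le_inf_right _ (abs_add_le a b)
    have h2 : (|a| + |b|) ⊓ |c| ≤ |a| ⊓ |c| + |b| ⊓ |c| :=
      aux_inf_subadd _ _ _ (abs_nonneg a) (abs_nonneg b) (abs_nonneg c)
    have h3 : |a + b| ⊓ |c| ≤ 0 := by
      calc |a + b| ⊓ |c| ≤ |a| ⊓ |c| + |b| ⊓ |c| := h1.trans h2
        _ = 0 := by rw [ha c hc, hb c hc, add_zero]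
    exact le_antisymm h3 (le_inf (abs_nonneg _) (abs_nonneg _))
  -- components of a nonnegative element are nonnegative
  have posParts : ∀ (v v₁ v₂ : E), 0 ≤ v → v₁ ∈ B → (∀ c ∈ B, |v₂| ⊓ |c| = 0) →
      v = v₁ + v₂ → 0 ≤ v₁ ∧ 0 ≤ v₂ := by
    intro v v₁ v₂ hv h1 h2 hsum
    have hd : |v₂| ⊓ |v₁| = 0 := h2 v₁ h1
    have hsum' : 0 ≤ v₁ + v₂ := hsum ▸ hv
    have hne1 : -v₁ ≤ v₂ := by
      have h : -v₁ + 0 ≤ -v₁ + (v₁ + v₂) := add_le_add le_rfl hsum'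
      rwa [add_zero, neg_add_cancel_left] at h
    have hne2 : -v₂ ≤ v₁ := by
      have h : -v₂ + 0 ≤ -v₂ + (v₁ + v₂) := add_le_add le_rfl hsum'
      rw [add_zero, add_comm v₁ v₂, neg_add_cancel_left] at h
      exact h
    constructor
    · have hn : -v₁ ⊔ 0 ≤ |v₂| ⊓ |v₁| :=
        le_inf (sup_le (hne1.trans (le_abs_self _)) (abs_nonneg _))
          (sup_le (neg_le_abs _) (abs_nonneg _))
      have h5 : -v₁ ≤ 0 := le_sup_left.trans (hd ▸ hn)
      exact neg_nonpos.mp h5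
    · have hn : -v₂ ⊔ 0 ≤ |v₂| ⊓ |v₁| :=
        le_inf (sup_le (neg_le_abs _) (abs_nonneg _))
          (sup_le (hne2.trans (le_abs_self _)) (abs_nonneg _))
      have h5 : -v₂ ≤ 0 := le_sup_left.trans (hd ▸ hn)
      exact neg_nonpos.mp h5
  -- Part 1: `T(B)` is an ideal of `T(E)`
  have partA : ∀ y ∈ LinearMap.range T, ∀ b ∈ B.map T, |y| ≤ |b| → y ∈ B.map T := by
    rintro y ⟨x, rfl⟩ b hb hle
    obtain ⟨c, hc, rfl⟩ := hb
    obtain ⟨x₁, hx₁, x₂, hx₂, hxeq⟩ := hBproj x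
    have hdisj : |T x₁| ⊓ |T x₂| = 0 := by
      rw [← Tabs, ← Tabs, ← Tinf, inf_comm, hx₂ x₁ hx₁, map_zero]
    have hle2 : |T x₂| ≤ |T x| := by
      have h := aux_abs_le_abs_add (T x₁) (T x₂) hdisj
      rwa [← map_add, ← hxeq] at h
    have hdc : |T x₂| ⊓ |T c| = 0 := by
      rw [← Tabs, ← Tabs, ← Tinf, hx₂ c hc, map_zero]
    have hzero : T x₂ = 0 := by
      have h4 : |T x₂| ≤ |T c| := hle2.trans hle
      have h5 : |T x₂| ≤ 0 := by
        rw [← hdc]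
        exact le_inf le_rfl h4
      have h6 : |T x₂| = 0 := le_antisymm h5 (abs_nonneg _)
      have h7 : T x₂ ≤ 0 := (le_abs_self _).trans h6.le
      have h8 : 0 ≤ T x₂ := neg_nonpos.mp ((neg_le_abs _).trans h6.le)
      exact le_antisymm h7 h8
    have h6 : T x = T x₁ := by rw [hxeq, map_add, hzero, add_zero]
    exact h6 ▸ ⟨x₁, hx₁, rfl⟩
  refine ⟨partA, ?_, ?_⟩
  · -- Part 2: band property
    intro D s hD hsr hub hlub
    obtain ⟨x, rfl⟩ := hsr
    obtain ⟨x₁, hx₁, x₂, hx₂, hxeq⟩ := hBproj x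
    -- `T x₁` is an upper bound of `D`
    have hubx₁ : ∀ d ∈ D, d ≤ T x₁ := by
      intro d hd
      obtain ⟨c, hc, rfl⟩ := hD hd
      set w : E := (c - x) ⊔ 0 with hw
      have hw0 : 0 ≤ w := le_sup_right
      have hTw : T w = 0 := by
        have h := hub _ hd
        rw [hw, hT, map_sub, map_zero, sup_eq_right.mpr (sub_nonpos.mpr h)]
      obtain ⟨w₁, hw₁, w₂, hw₂, hweq⟩ := hBproj w
      obtain ⟨hw₁0, hw₂0⟩ := posParts w w₁ w₂ hw0 hw₁ hw₂ hweq
      have hcx : c - w₁ - x₁ ≤ x₂ + w₂ := by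
        rw [sub_le_iff_le_add, sub_le_iff_le_add]
        calc c ≤ w + x := sub_le_iff_le_add.mp (le_sup_left : c - x ≤ w)
          _ = x₂ + w₂ + x₁ + w₁ := by rw [hxeq, hweq]; abel
      set z : E := (c - w₁ - x₁) ⊔ 0 with hz
      have hz0 : 0 ≤ z := le_sup_right
      have hzB : z ∈ B := by
        have hmem : c - w₁ - x₁ ∈ B := B.sub_mem (B.sub_mem hc hw₁) hx₁
        refine hBideal z (c - w₁ - x₁) ?_ hmem
        rw [abs_of_nonneg hz0]
        exact sup_le (le_abs_self _) (abs_nonneg _)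
      have hzle : z ≤ |x₂ + w₂| := by
        have h1 : z ≤ (x₂ + w₂) ⊔ 0 := sup_le_sup_right hcx 0
        exact h1.trans (sup_le (le_abs_self _) (abs_nonneg _))
      have hzd : |x₂ + w₂| ⊓ |z| = 0 := addDisj x₂ w₂ hx₂ hw₂ z hzB
      have hzz : z = 0 := by
        have h1 : z ≤ |x₂ + w₂| ⊓ |z| := le_inf hzle (le_abs_self _)
        exact le_antisymm (hzd ▸ h1) hz0
      have hineq : c - w₁ ≤ x₁ :=
        sub_nonpos.mp (le_sup_left.trans hzz.le)
      have hTw₁ : T w₁ = 0 := by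
        have h1 : T w₁ ≤ T w := Tmono (by rw [hweq]; exact le_add_of_nonneg_right hw₂0)
        have h2 : (0 : F) ≤ T w₁ := by
          have h := Tmono hw₁0; rwa [map_zero] at h
        rw [hTw] at h1
        exact le_antisymm h1 h2
      have h := Tmono hineq
      rw [map_sub, hTw₁, sub_zero] at h
      exact h
    have hsle : T x ≤ T x₁ := hlub (T x₁) ⟨x₁, rfl⟩ hubx₁
    by_cases hDne : ∃ d, d ∈ D
    · obtain ⟨d₀, hd₀⟩ := hDne
      obtain ⟨c₀, hc₀, rfl⟩ := hD hd₀
      set b : E := |x₁| + |c₀| with hb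
      have hbB : b ∈ B := B.add_mem
        (hBideal _ x₁ (by rw [abs_abs]) hx₁) (hBideal _ c₀ (by rw [abs_abs]) hc₀)
      have hTb : 0 ≤ T b := by
        have h0 : (0:E) ≤ b := add_nonneg (abs_nonneg _) (abs_nonneg _)
        have h := Tmono h0; rwa [map_zero] at h
      have habs : |T x| ≤ |T b| := by
        rw [abs_of_nonneg hTb]
        refine sup_le ?_ ?_
        · calc T x ≤ T x₁ := hsle
            _ ≤ |T x₁| := le_abs_self _
            _ = T |x₁| := (Tabs _).symm
            _ ≤ T b := Tmono (le_add_of_nonneg_right (abs_nonneg _))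
        · have h1 : T c₀ ≤ T x := hub _ hd₀
          calc -(T x) ≤ -(T c₀) := neg_le_neg_iff.mpr h1
            _ ≤ |T c₀| := neg_le_abs _
            _ = T |c₀| := (Tabs _).symm
            _ ≤ T b := Tmono (le_add_of_nonneg_left (abs_nonneg _))
      exact partA (T x) ⟨x, rfl⟩ (T b) ⟨b, hbB, rfl⟩ habs
    · push_neg at hDne
      have h1 : T x ≤ 0 := hlub 0 ⟨0, map_zero T⟩ (fun d hd => absurd hd (hDne d))
      have h2 : T x ≤ T x + T x :=
        hlub (T x + T x) ⟨x + x, by rw [map_add]⟩ (fun d hd => absurd hd (hDne d))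
      have h3 : (0:F) ≤ T x := (le_add_iff_nonneg_right _).mp h2
      have h4 : T x = 0 := le_antisymm h1 h3
      rw [h4]
      exact Submodule.zero_mem _
  · -- Part 3: decomposition
    rintro y ⟨x, rfl⟩
    obtain ⟨x₁, hx₁, x₂, hx₂, hxeq⟩ := hBproj x
    refine ⟨T x₁, ⟨x₁, hx₁, rfl⟩, T x₂, ⟨x₂, rfl⟩, ?_, by rw [hxeq, map_add]⟩
    rintro b ⟨c, hc, rfl⟩
    rw [← Tabs, ← Tabs, ← Tinf, hx₂ c hc, map_zero]
end

section
/- Let E and F be Riesz spaces and let T : E → F be a surjective Riesz homomorphism. Then the following are equivalent: (1) T is a Riesz σ-homomorphism, i.e., whenever x is the supremum in E of a sequence (xₙ), then T(x) is the supremum in F of (T(xₙ)); (2) for every σ-ideal A of F, the preimage T⁻¹(A) is a σ-ideal of E; (3) the kernel of T is a σ-ideal of E. -/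
/-- For a surjective Riesz homomorphism `T : E → F`, TFAE:
(1) `T` is a Riesz σ-homomorphism;
(2) the preimage of every σ-ideal of `F` is a σ-ideal of `E`;
(3) the kernel of `T` is a σ-ideal of `E`. -/
theorem stmt_8 {E F : Type*}
    [AddCommGroup E] [Lattice E] [Module ℝ E]
    [CovariantClass E E (· + ·) (· ≤ ·)] [PosSMulMono ℝ E]
    [AddCommGroup F] [Lattice F] [Module ℝ F]
    [CovariantClass F F (· + ·) (· ≤ ·)] [PosSMulMono ℝ F]
    (T : E →ₗ[ℝ] F) (hT : ∀ x y : E, T (x ⊔ y) = T x ⊔ T y)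
    (hsurj : Function.Surjective T) :
    List.TFAE [
      -- (1) `T` is a Riesz σ-homomorphism
      ∀ (u : ℕ → E) (x : E), IsLUB (Set.range u) x →
        IsLUB (Set.range fun n => T (u n)) (T x),
      -- (2) preimages of σ-ideals are σ-ideals
      ∀ A : Submodule ℝ F,
        ((∀ x y : F, |x| ≤ |y| → y ∈ A → x ∈ A) ∧
          (∀ (u : ℕ → F) (x : F), (∀ n, u n ∈ A) → (∀ n, 0 ≤ u n) → Monotone u →
            IsLUB (Set.range u) x → x ∈ A)) →
        ((∀ x y : E, |x| ≤ |y| → y ∈ A.comap T → x ∈ A.comap T) ∧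
          (∀ (u : ℕ → E) (x : E), (∀ n, u n ∈ A.comap T) → (∀ n, 0 ≤ u n) →
            Monotone u → IsLUB (Set.range u) x → x ∈ A.comap T)),
      -- (3) the kernel of `T` is a σ-ideal
      (∀ x y : E, |x| ≤ |y| → y ∈ LinearMap.ker T → x ∈ LinearMap.ker T) ∧
        (∀ (u : ℕ → E) (x : E), (∀ n, u n ∈ LinearMap.ker T) → (∀ n, 0 ≤ u n) →
          Monotone u → IsLUB (Set.range u) x → x ∈ LinearMap.ker T)] := by

  have Tmono : Monotone T := fun a b hab => by
    have h : T a ⊔ T b = T b := by rw [← hT, sup_eq_right.mpr hab]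
    exact sup_eq_right.mp h
  have Tabs : ∀ a : E, T |a| = |T a| := fun a => by
    rw [abs, abs, hT, map_neg]
  tfae_have 1 → 2 := by
    intro h1 A ⟨hAideal, hAsig⟩
    constructor
    · intro x y hxy hy
      exact hAideal (T x) (T y) (by rw [← Tabs, ← Tabs]; exact Tmono hxy) hy
    · intro u x hu hpos hm hlub
      exact hAsig (fun n => T (u n)) (T x) hu (fun n => by simpa using Tmono (hpos n))
        (fun a b hab => Tmono (hm hab)) (h1 u x hlub)
  tfae_have 2 → 3 := by
    intro h2
    have hbot := h2 ⊥ ⟨fun x y hxy hy => by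
        have : x = 0 := by
          have hy0 : y = 0 := by simpa using hy
          have habs : |x| ≤ 0 := by simpa [hy0] using hxy
          have h1 : x ≤ 0 := (le_abs_self x).trans habs
          have h2 : -x ≤ 0 := (neg_le_abs x).trans habs
          exact le_antisymm h1 (neg_nonpos.mp h2)
        simp [this],
      fun u x hu hpos hm hlub => by
        have hx0 : x = 0 := by
          have hub : x ≤ 0 := hlub.2 (by rintro _ ⟨n, rfl⟩; simpa using (hu n).le)
          have : u 0 ≤ x := hlub.1 ⟨0, rfl⟩
          have h0 : (0 : F) ≤ x := by
            have := hu 0; simp only [Submodule.mem_bot] at this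
            rwa [this] at ‹u 0 ≤ x›
          exact le_antisymm hub h0
        simp [hx0]⟩
    constructor
    · intro x y hxy hy
      have := hbot.1 x y hxy (by simpa [Submodule.mem_comap, LinearMap.mem_ker] using hy)
      simpa [Submodule.mem_comap, LinearMap.mem_ker] using this
    · intro u x hu hpos hm hlub
      have := hbot.2 u x (fun n => by
        simpa [Submodule.mem_comap, LinearMap.mem_ker] using hu n) hpos hm hlub
      simpa [Submodule.mem_comap, LinearMap.mem_ker] using this
  tfae_have 3 → 1 := by
    intro ⟨_, hker⟩ u x hlub
    constructor
    · rintro _ ⟨n, rfl⟩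
      exact Tmono (hlub.1 ⟨n, rfl⟩)
    · intro z hz
      obtain ⟨y, rfl⟩ := hsurj z
      -- partial sups
      set w : ℕ → E := fun n => Nat.rec (u 0) (fun k wk => wk ⊔ u (k + 1)) n with hw
      have hws : ∀ n, w (n + 1) = w n ⊔ u (n + 1) := fun n => rfl
      have hule : ∀ n, u n ≤ w n := by
        intro n; cases n with
        | zero => exact le_rfl
        | succ k => rw [hws]; exact le_sup_right
      have hwmono : Monotone w := monotone_nat_of_le_succ fun n => by
        rw [hws]; exact le_sup_left
      have hwle : ∀ n, w n ≤ x := by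
        intro n; induction n with
        | zero => exact hlub.1 ⟨0, rfl⟩
        | succ k ih => rw [hws]; exact sup_le ih (hlub.1 ⟨k + 1, rfl⟩)
      have hTw : ∀ n, T (w n) ≤ T y := by
        intro n; induction n with
        | zero => exact hz ⟨0, rfl⟩
        | succ k ih =>
          rw [hws, hT]; exact sup_le ih (hz ⟨k + 1, rfl⟩)
      set d : ℕ → E := fun n => (w n ⊔ y) - y with hd
      have hdpos : ∀ n, 0 ≤ d n := fun n => sub_nonneg.mpr le_sup_right
      have hdmono : Monotone d := fun a b hab =>
        sub_le_sub_right (sup_le_sup_right (hwmono hab) y) y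
      have hdker : ∀ n, d n ∈ LinearMap.ker T := fun n => by
        simp only [LinearMap.mem_ker, hd, map_sub, hT, sup_eq_right.mpr (hTw n), sub_self]
      have hdlub : IsLUB (Set.range d) ((x ⊔ y) - y) := by
        constructor
        · rintro _ ⟨n, rfl⟩
          exact sub_le_sub_right (sup_le_sup_right (hwle n) y) y
        · intro c hc
          rw [sub_le_iff_le_add]
          have hc0 : (0 : E) ≤ c := (hdpos 0).trans (hc ⟨0, rfl⟩)
          refine sup_le ?_ (le_add_of_nonneg_left hc0)
          refine hlub.2 ?_
          rintro _ ⟨n, rfl⟩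
          have h1 : w n ⊔ y ≤ c + y := sub_le_iff_le_add.mp (hc ⟨n, rfl⟩)
          exact (hule n).trans ((le_sup_left).trans h1)
      have hmem := hker d ((x ⊔ y) - y) hdker hdpos hdmono hdlub
      have h0 : T (x ⊔ y) - T y = 0 := by
        simpa [LinearMap.mem_ker, map_sub] using hmem
      have : T x ⊔ T y = T y := by
        have := sub_eq_zero.mp h0
        rwa [hT] at this
      exact sup_eq_right.mp this
  tfae_finish
end

section
/- Let E and F be Riesz spaces and let T : E → F be a surjective Riesz homomorphism. If E is uniformly complete, then F is uniformly complete; that is, the Riesz homomorphic image of a uniformly complete Riesz space is uniformly complete. -/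
section aux
variable {G : Type*} [AddCommGroup G] [Lattice G]
    [CovariantClass G G (· + ·) (· ≤ ·)]

lemma aux_abs_sum_le (e : ℕ → G) (s : Finset ℕ) :
    |∑ j ∈ s, e j| ≤ ∑ j ∈ s, |e j| := by
  induction s using Finset.induction with
  | empty => simp
  | insert _ _ h ih =>
      rw [Finset.sum_insert h, Finset.sum_insert h]
      exact (abs_add_le _ _).trans (add_le_add le_rfl ih)

lemma aux_neg_le_neg {a b : G} (h : a ≤ b) : -b ≤ -a := by
  have h1 := add_le_add_left h (-a + -b)
  calc -b = -a + -b + a := by abel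
    _ ≤ -a + -b + b := by rw [add_comm (-a + -b) a, add_comm (-a + -b) b]; exact h1
    _ = -a := by abel

lemma aux_neg_abs_le (a : G) : -|a| ≤ a := by
  have h1 : -a ≤ |a| := le_sup_right
  have h2 := aux_neg_le_neg h1
  rwa [neg_neg] at h2

lemma aux_abs_le {a b : G} (h1 : a ≤ b) (h2 : -b ≤ a) : |a| ≤ b := by
  have h3 : -a ≤ b := by
    have := aux_neg_le_neg h2
    rwa [neg_neg] at this
  calc |a| = a ⊔ -a := rfl
    _ ≤ b := sup_le h1 h3

lemma aux_sum_le {f g : ℕ → G} {s : Finset ℕ} (h : ∀ j ∈ s, f j ≤ g j) :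
    ∑ j ∈ s, f j ≤ ∑ j ∈ s, g j := by
  induction s using Finset.induction with
  | empty => simp
  | @insert a s hnotmem ih =>
      rw [Finset.sum_insert hnotmem, Finset.sum_insert hnotmem]
      exact add_le_add (h _ (Finset.mem_insert_self _ _))
        (ih fun j hj => h j (Finset.mem_insert_of_mem hj))

variable [Module ℝ G] [PosSMulMono ℝ G]

lemma aux_smul_mono {c₁ c₂ : ℝ} {w : G} (h : c₁ ≤ c₂) (hw : 0 ≤ w) :
    c₁ • w ≤ c₂ • w := by
  rw [← sub_nonneg, ← sub_smul]
  have := smul_le_smul_of_nonneg_left hw (sub_nonneg.2 h)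
  simpa using this

end aux

/-- If `T : E → F` is a surjective Riesz homomorphism and `E` is
uniformly complete, then `F` is uniformly complete. -/
theorem stmt_9 {E F : Type*}
    [AddCommGroup E] [Lattice E] [Module ℝ E]
    [CovariantClass E E (· + ·) (· ≤ ·)] [PosSMulMono ℝ E]
    [AddCommGroup F] [Lattice F] [Module ℝ F]
    [CovariantClass F F (· + ·) (· ≤ ·)] [PosSMulMono ℝ F]
    (T : E →ₗ[ℝ] F) (hT : ∀ x y : E, T (x ⊔ y) = T x ⊔ T y)
    (hsurj : Function.Surjective T)
    -- `E` is uniformly complete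
    (hE : ∀ w : E, 0 ≤ w → ∀ u : ℕ → E,
      (∀ ε : ℝ, 0 < ε → ∃ N : ℕ, ∀ m ≥ N, ∀ n ≥ N, |u m - u n| ≤ ε • w) →
      ∃ x : E, ∀ ε : ℝ, 0 < ε → ∃ N : ℕ, ∀ n ≥ N, |x - u n| ≤ ε • w) :
    -- `F` is uniformly complete
    ∀ w : F, 0 ≤ w → ∀ u : ℕ → F,
      (∀ ε : ℝ, 0 < ε → ∃ N : ℕ, ∀ m ≥ N, ∀ n ≥ N, |u m - u n| ≤ ε • w) →
      ∃ x : F, ∀ ε : ℝ, 0 < ε → ∃ N : ℕ, ∀ n ≥ N, |x - u n| ≤ ε • w := by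
  intro w hw u hu
  -- T is monotone
  have hmono : ∀ {a b : E}, a ≤ b → T a ≤ T b := by
    intro a b hab
    have h : T (a ⊔ b) = T a ⊔ T b := hT a b
    rw [sup_eq_right.2 hab] at h
    rw [h]
    exact le_sup_left
  -- T commutes with abs
  have habs : ∀ z : E, T |z| = |T z| := by
    intro z
    have : |z| = z ⊔ -z := rfl
    rw [this, hT, map_neg]
    rfl
  -- T commutes with inf
  have hinf : ∀ x y : E, T (x ⊓ y) = T x ⊓ T y := by
    intro x y
    have h : x ⊓ y = -(-x ⊔ -y) := by rw [neg_sup, neg_neg, neg_neg]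
    rw [h, map_neg, hT, map_neg, map_neg, neg_sup, neg_neg, neg_neg]
  -- a nonneg preimage of w
  obtain ⟨w₁, hw₁⟩ := hsurj w
  set w₀ := |w₁| with hw₀def
  have hw₀ : (0:E) ≤ w₀ := abs_nonneg w₁
  have hTw₀ : T w₀ = w := by rw [hw₀def, habs, hw₁, abs_of_nonneg hw]
  -- geometric scalars
  set c : ℕ → ℝ := fun k => (1/2:ℝ)^k with hc
  have hcpos : ∀ k, 0 < c k := fun k => by positivity
  -- uniform Cauchy indices
  choose N hN using fun k => hu (c k) (hcpos k)
  obtain ⟨m, hmsm, hmN⟩ : ∃ m : ℕ → ℕ, StrictMono m ∧ ∀ k, N k ≤ m k := by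
    refine ⟨fun k => Nat.rec (N 0) (fun k ih => max (ih+1) (N (k+1))) k, ?_, ?_⟩
    · apply strictMono_nat_of_lt_succ
      intro n
      exact lt_of_lt_of_le (Nat.lt_succ_self _) (le_max_left _ _)
    · intro k
      cases k with
      | zero => exact le_rfl
      | succ k => exact le_max_right _ _
  have hdiff : ∀ k, |u (m (k+1)) - u (m k)| ≤ c k • w := by
    intro k
    exact hN k (m (k+1)) ((hmN k).trans (hmsm.monotone (Nat.le_succ k)))
      (m k) (hmN k)
  -- truncated preimages of the differences
  choose e' he' using fun k => hsurj (u (m (k+1)) - u (m k))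
  set e : ℕ → E := fun k => (e' k ⊔ (-(c k • w₀))) ⊓ (c k • w₀) with he
  have hcw₀ : ∀ k, (0:E) ≤ c k • w₀ := fun k => by
    have := smul_le_smul_of_nonneg_left hw₀ (hcpos k).le
    simpa using this
  have heabs : ∀ k, |e k| ≤ c k • w₀ := by
    intro k
    have h1 : e k ≤ c k • w₀ := inf_le_right
    have h2 : -(c k • w₀) ≤ e k :=
      le_inf le_sup_right (neg_le_self (hcw₀ k))
    exact aux_abs_le h1 h2
  have hTe : ∀ k, T (e k) = u (m (k+1)) - u (m k) := by
    intro k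
    have hd := hdiff k
    set d := u (m (k+1)) - u (m k) with hdd
    have h1 : d ≤ c k • w := (le_abs_self d).trans hd
    have h2 : -(c k • w) ≤ d := (aux_neg_le_neg hd).trans (aux_neg_abs_le d)
    rw [he]
    simp only [hinf, hT, map_neg, map_smul, hTw₀, he' k, ← hdd]
    rw [sup_eq_left.2 h2, inf_eq_left.2 h1]
  -- partial sums
  obtain ⟨v₀, hv₀⟩ := hsurj (u (m 0))
  set s : ℕ → E := fun k => v₀ + ∑ j ∈ Finset.range k, e j with hs
  have hTs : ∀ k, T (s k) = u (m k) := by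
    intro k
    induction k with
    | zero => simp [hs, hv₀]
    | succ k ih =>
        have hstep : s (k+1) = s k + e k := by
          rw [hs]
          simp only [Finset.sum_range_succ]
          abel
        rw [hstep, map_add, ih, hTe k]
        abel
  -- the partial sums are w₀-uniformly Cauchy
  have hsdiff : ∀ l k, l ≤ k → |s k - s l| ≤ (2 * c l) • w₀ := by
    intro l k hlk
    have h1 : s k - s l = ∑ j ∈ Finset.Ico l k, e j := by
      rw [hs]
      simp only [add_sub_add_left_eq_sub]
      rw [Finset.sum_Ico_eq_sub _ hlk]
    have hgeom : ∑ j ∈ Finset.Ico l k, c j ≤ 2 * c l := by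
      rw [Finset.sum_Ico_eq_sum_range]
      have : ∀ i, c (l + i) = c l * c i := fun i => by
        simp only [hc]; rw [pow_add]
      calc ∑ i ∈ Finset.range (k - l), c (l + i)
          = c l * ∑ i ∈ Finset.range (k - l), c i := by
            rw [Finset.mul_sum]
            exact Finset.sum_congr rfl fun i _ => this i
        _ ≤ c l * 2 := by
            have h2 : ∑ i ∈ Finset.range (k - l), c i ≤ 2 :=
              sum_geometric_two_le _
            exact mul_le_mul_of_nonneg_left h2 (hcpos l).le
        _ = 2 * c l := by ring
    calc |s k - s l| = |∑ j ∈ Finset.Ico l k, e j| := by rw [h1]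
      _ ≤ ∑ j ∈ Finset.Ico l k, |e j| := aux_abs_sum_le _ _
      _ ≤ ∑ j ∈ Finset.Ico l k, c j • w₀ :=
          aux_sum_le fun j _ => heabs j
      _ = (∑ j ∈ Finset.Ico l k, c j) • w₀ := (Finset.sum_smul).symm
      _ ≤ (2 * c l) • w₀ := aux_smul_mono hgeom hw₀
  have hsC : ∀ ε : ℝ, 0 < ε → ∃ K, ∀ a ≥ K, ∀ b ≥ K, |s a - s b| ≤ ε • w₀ := by
    intro ε hε
    obtain ⟨K, hK⟩ := exists_pow_lt_of_lt_one (show (0:ℝ) < ε/2 by positivity)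
      (show (1/2:ℝ) < 1 by norm_num)
    have hK2 : 2 * c K ≤ ε := by
      have : c K ≤ ε / 2 := le_of_lt hK
      simp only [hc] at this ⊢
      linarith
    have key : ∀ a b, K ≤ a → a ≤ b → |s b - s a| ≤ ε • w₀ := by
      intro a b hKa hab
      have hca : c a ≤ c K := pow_le_pow_of_le_one (by norm_num) (by norm_num) hKa
      have h2 : 2 * c a ≤ ε := by linarith
      exact (hsdiff a b hab).trans (aux_smul_mono h2 hw₀)
    refine ⟨K, fun a ha b hb => ?_⟩
    rcases le_total a b with h | h
    · rw [abs_sub_comm]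
      exact key a b ha h
    · exact key b a hb h
  -- get the limit in E and push it forward
  obtain ⟨x, hx⟩ := hE w₀ hw₀ s hsC
  refine ⟨T x, fun ε hε => ?_⟩
  obtain ⟨K₁, hK₁⟩ := hx (ε/2) (by positivity)
  obtain ⟨N₂, hN₂⟩ := hu (ε/2) (by positivity)
  set k := max K₁ N₂ with hk
  have hmk : N₂ ≤ m k := le_trans (le_max_right _ _) hmsm.le_apply
  refine ⟨m k, fun n hn => ?_⟩
  have h1 : |T x - u (m k)| ≤ (ε/2) • w := by
    calc |T x - u (m k)| = |T (x - s k)| := by rw [map_sub, hTs]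
      _ = T |x - s k| := (habs _).symm
      _ ≤ T ((ε/2) • w₀) := hmono (hK₁ k (le_max_left _ _))
      _ = (ε/2) • w := by rw [map_smul, hTw₀]
  have h2 : |u (m k) - u n| ≤ (ε/2) • w :=
    hN₂ (m k) hmk n (hmk.trans hn)
  calc |T x - u n| = |(T x - u (m k)) + (u (m k) - u n)| := by
        congr 1; abel
    _ ≤ |T x - u (m k)| + |u (m k) - u n| := abs_add_le _ _
    _ ≤ (ε/2) • w + (ε/2) • w := add_le_add h1 h2
    _ = ε • w := by rw [← add_smul, add_halves]
end

section
/- Let A be an ideal of a Riesz space E and let E/A be the quotient Riesz space. Then the following are equivalent: (1) E/A is Archimedean; (2) A is uniformly closed, i.e., whenever a sequence in A converges relatively uniformly to some x ∈ E, then x ∈ A; (3) whenever (xₙ) is an increasing sequence of nonnegative elements of A that converges relatively uniformly to x ∈ E, then x ∈ A; (4) whenever x, w ∈ E with x ≥ 0, w ≥ 0 and (n • x − w)⁺ ∈ A for every natural number n, then x ∈ A. -/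
/-- For an ideal `A` of a Riesz space `E` and the quotient Riesz
space `E ⧸ A` (with order `r`), TFAE:
(1) `E ⧸ A` is Archimedean;
(2) `A` is uniformly closed;
(3) every increasing sequence of nonnegative elements of `A` converging
relatively uniformly to some `x ∈ E` has `x ∈ A`;
(4) if `x, w ≥ 0` and `(n • x - w)⁺ ∈ A` for all `n : ℕ`, then `x ∈ A`. -/
theorem stmt_13 {E : Type*}
    [AddCommGroup E] [Lattice E] [Module ℝ E]
    [CovariantClass E E (· + ·) (· ≤ ·)] [PosSMulMono ℝ E]
    (A : Submodule ℝ E) (hA : ∀ x y : E, |x| ≤ |y| → y ∈ A → x ∈ A) :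
    letI mk : E → E ⧸ A := Submodule.Quotient.mk
    letI r : (E ⧸ A) → (E ⧸ A) → Prop := fun a b =>
      ∃ x₁ y₁ : E, mk x₁ = a ∧ mk y₁ = b ∧ x₁ ≤ y₁
    List.TFAE [
      -- (1) `E ⧸ A` is Archimedean
      ∀ a b : E ⧸ A, r 0 a → r 0 b → (∀ n : ℕ, r (n • a) b) → a = 0,
      -- (2) `A` is uniformly closed
      ∀ (u : ℕ → E) (x : E), (∀ n, u n ∈ A) →
        (∃ w : E, 0 ≤ w ∧ ∀ ε : ℝ, 0 < ε → ∃ N : ℕ, ∀ n ≥ N, |x - u n| ≤ ε • w) →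
        x ∈ A,
      -- (3) increasing nonnegative sequences of `A` converging relatively
      -- uniformly have their limit in `A`
      ∀ (u : ℕ → E) (x : E), (∀ n, u n ∈ A) → (∀ n, 0 ≤ u n) → Monotone u →
        (∃ w : E, 0 ≤ w ∧ ∀ ε : ℝ, 0 < ε → ∃ N : ℕ, ∀ n ≥ N, |x - u n| ≤ ε • w) →
        x ∈ A,
      -- (4)
      ∀ x w : E, 0 ≤ x → 0 ≤ w → (∀ n : ℕ, (n • x - w) ⊔ 0 ∈ A) → x ∈ A] := by
  simp only []
  -- basic facts
  have habs : ∀ x : E, |x| ∈ A → x ∈ A := fun x hx => hA x |x| (by rw [abs_abs]) hx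
  have habs' : ∀ x : E, x ∈ A → |x| ∈ A := fun x hx => hA |x| x (by rw [abs_abs]) hx
  have hmk0 : ∀ x : E, x ∈ A ↔ (Submodule.Quotient.mk x : E ⧸ A) = 0 := fun x => (Submodule.Quotient.mk_eq_zero A).symm
  have hmkeq : ∀ x y : E, (Submodule.Quotient.mk x : E ⧸ A) = Submodule.Quotient.mk y ↔ x - y ∈ A := fun x y => Submodule.Quotient.eq A
  have hmknsmul : ∀ (n : ℕ) (x : E), (Submodule.Quotient.mk (n • x) : E ⧸ A) = n • Submodule.Quotient.mk x := by
    intro n x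
    induction n with
    | zero => simp
    | succ k ih => rw [succ_nsmul, Submodule.Quotient.mk_add, ih, succ_nsmul]
  have hr : ∀ x y : E, (∃ x₁ y₁ : E, (Submodule.Quotient.mk x₁ : E ⧸ A) = Submodule.Quotient.mk x ∧
      (Submodule.Quotient.mk y₁ : E ⧸ A) = Submodule.Quotient.mk y ∧ x₁ ≤ y₁) ↔ ∃ c ∈ A, x - y ≤ c := by
    intro x y
    constructor
    · rintro ⟨x₁, y₁, hx₁, hy₁, hle⟩
      refine ⟨(x - x₁) + (y₁ - y), ?_, ?_⟩
      · have h1 : -(x₁ - x) + (y₁ - y) ∈ A :=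
          A.add_mem (A.neg_mem ((hmkeq x₁ x).mp hx₁)) ((hmkeq y₁ y).mp hy₁)
        simpa [neg_sub] using h1
      · have h : x - y - ((x - x₁) + (y₁ - y)) = x₁ - y₁ := by abel
        have h2 : x - y - ((x - x₁) + (y₁ - y)) ≤ 0 := by rw [h]; exact sub_nonpos.mpr hle
        exact sub_nonpos.mp h2
    · rintro ⟨c, hc, hle⟩
      exact ⟨x - c, y, (hmkeq (x - c) x).mpr (by simpa using A.neg_mem hc), rfl,
        sub_le_comm.mp hle⟩
  -- scalar monotonicity helper : c ≤ d, 0 ≤ w → c • w ≤ d • w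
  have hsm : ∀ (c d : ℝ) (w : E), c ≤ d → 0 ≤ w → c • w ≤ d • w := by
    intro c d w hcd hw
    have h0 : (0:E) ≤ (d - c) • w := by
      have := smul_le_smul_of_nonneg_left hw (sub_nonneg.mpr hcd)
      simpa using this
    have : c • w + 0 ≤ c • w + (d - c) • w := add_le_add_right h0 _
    simpa [← add_smul] using this
  tfae_have 1 → 2 := by
    intro h1 u x hu hconv
    obtain ⟨w, hw, hc⟩ := hconv
    refine habs x ((hmk0 |x|).mpr ?_)
    refine h1 (Submodule.Quotient.mk |x|) (Submodule.Quotient.mk w) ⟨0, |x|, by simp, rfl, abs_nonneg x⟩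
      ⟨0, w, by simp, rfl, hw⟩ ?_
    intro n
    obtain ⟨N, hN⟩ := hc (((n:ℝ)+1)⁻¹) (by positivity)
    have hle : |x - u N| ≤ (((n:ℝ)+1)⁻¹) • w := hN N le_rfl
    have h1' : |x| - |u N| ≤ (((n:ℝ)+1)⁻¹) • w :=
      le_trans (le_trans (le_abs_self _) (abs_abs_sub_abs_le x (u N))) hle
    have h2 : |x| ≤ |u N| + (((n:ℝ)+1)⁻¹) • w := by
      have := sub_le_iff_le_add.mp h1'
      rwa [add_comm] at this
    rw [← hmknsmul]
    refine (hr (n • |x|) w).mpr ⟨(n+1) • |u N|, nsmul_mem (habs' _ (hu N)) (n+1), ?_⟩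
    have h3 : (n+1) • |x| ≤ (n+1) • (|u N| + (((n:ℝ)+1)⁻¹) • w) := nsmul_le_nsmul_right h2 (n+1)
    have h4 : (n+1) • ((((n:ℝ)+1)⁻¹) • w) = w := by
      rw [← Nat.cast_smul_eq_nsmul ℝ, smul_smul]
      push_cast
      rw [mul_inv_cancel₀ (by positivity), one_smul]
    rw [smul_add, h4] at h3
    have h5 : n • |x| ≤ (n+1) • |x| := by
      rw [succ_nsmul]
      exact le_add_of_nonneg_right (abs_nonneg x)
    exact sub_le_iff_le_add.mpr (le_trans h5 h3)
  tfae_have 2 → 3 := by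
    intro h2 u x hu _ _ hc
    exact h2 u x hu hc
  tfae_have 3 → 4 := by
    intro h3 x w hx hw hmem
    set u : ℕ → E := fun n => (x - (((n:ℝ)+1)⁻¹) • w) ⊔ 0 with hudef
    have huA : ∀ n, u n ∈ A := by
      intro n
      have hc : (0:ℝ) < ((n:ℝ)+1)⁻¹ := by positivity
      set c : ℝ := ((n:ℝ)+1)⁻¹
      have ha : ((n+1 : ℕ) • x - w) ⊔ 0 ∈ A := hmem (n+1)
      refine hA (u n) (c • (((n+1 : ℕ) • x - w) ⊔ 0)) ?_ (A.smul_mem c ha)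
      have h0 : (0:E) ≤ c • (((n+1 : ℕ) • x - w) ⊔ 0) :=
        smul_nonneg hc.le le_sup_right
      have h1 : x - c • w ≤ c • (((n+1 : ℕ) • x - w) ⊔ 0) := by
        have := smul_le_smul_of_nonneg_left (le_sup_left :
          ((n+1 : ℕ) • x - w) ≤ ((n+1 : ℕ) • x - w) ⊔ 0) hc.le
        have heq : c • ((n+1 : ℕ) • x - w) = x - c • w := by
          rw [smul_sub, ← Nat.cast_smul_eq_nsmul ℝ, smul_smul]
          have : c * ((n+1 : ℕ) : ℝ) = 1 := by
            push_cast
            rw [inv_mul_cancel₀ (by positivity)]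
          rw [this, one_smul]
        rw [heq] at this
        exact this
      have hsup : u n ≤ c • (((n+1 : ℕ) • x - w) ⊔ 0) := sup_le h1 h0
      rw [abs_of_nonneg (le_sup_right : (0:E) ≤ u n), abs_of_nonneg h0]
      exact hsup
    have hupos : ∀ n, 0 ≤ u n := fun n => le_sup_right
    have humono : Monotone u := by
      intro m n hmn
      refine sup_le_sup_right ?_ 0
      have : (((n:ℝ)+1)⁻¹) • w ≤ (((m:ℝ)+1)⁻¹) • w := by
        refine hsm _ _ w ?_ hw
        have h1 : ((m:ℝ)+1) ≤ ((n:ℝ)+1) := by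
          have : (m:ℝ) ≤ n := by exact_mod_cast hmn
          linarith
        exact inv_anti₀ (by positivity) h1
      exact sub_le_sub_left this x
    have hub : ∀ n, u n ≤ x := by
      intro n
      refine sup_le (sub_le_self x (smul_nonneg ?_ hw)) hx
      positivity
    have hlb : ∀ n : ℕ, x - (((n:ℝ)+1)⁻¹) • w ≤ u n := fun n => le_sup_left
    refine h3 u x huA hupos humono ⟨w, hw, ?_⟩
    intro ε hε
    obtain ⟨N, hN⟩ := exists_nat_gt (1/ε)
    refine ⟨N, fun n hn => ?_⟩
    have hxu : 0 ≤ x - u n := sub_nonneg.mpr (hub n)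
    rw [abs_of_nonneg hxu]
    have h1 : x - u n ≤ (((n:ℝ)+1)⁻¹) • w := by
      have := hlb n
      have : x - u n ≤ x - (x - (((n:ℝ)+1)⁻¹) • w) := sub_le_sub_left this x
      simpa using this
    refine le_trans h1 (hsm _ _ w ?_ hw)
    have hn1 : (1/ε) < (n:ℝ) + 1 := by
      have : (N:ℝ) ≤ n := by exact_mod_cast hn
      linarith
    rw [inv_le_iff_one_le_mul₀ (by positivity)]
    rw [div_lt_iff₀ hε] at hn1
    nlinarith
  tfae_have 4 → 1 := by
    intro h4 a b h0a h0b hab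
    obtain ⟨p, q, hp, hq, hpq⟩ := h0a
    obtain ⟨p', q', hp', hq', hpq'⟩ := h0b
    have hpA : p ∈ A := by
      have : (Submodule.Quotient.mk p : E ⧸ A) = Submodule.Quotient.mk 0 := by simpa using hp
      simpa using (hmkeq p 0).mp this
    have hp'A : p' ∈ A := by
      have : (Submodule.Quotient.mk p' : E ⧸ A) = Submodule.Quotient.mk 0 := by simpa using hp'
      simpa using (hmkeq p' 0).mp this
    set x := q - p with hxdef
    set w := q' - p' with hwdef
    have hx : 0 ≤ x := sub_nonneg.mpr hpq
    have hw : 0 ≤ w := sub_nonneg.mpr hpq'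
    have hmkx : (Submodule.Quotient.mk x : E ⧸ A) = a := by
      rw [← hq]
      exact (hmkeq x q).mpr (by rw [hxdef]; simpa [sub_sub_cancel_left] using A.neg_mem hpA)
    have hmkw : (Submodule.Quotient.mk w : E ⧸ A) = b := by
      rw [← hq']
      exact (hmkeq w q').mpr (by rw [hwdef]; simpa [sub_sub_cancel_left] using A.neg_mem hp'A)
    have key : ∀ n : ℕ, (n • x - w) ⊔ 0 ∈ A := by
      intro n
      have hrn : ∃ x₁ y₁ : E, (Submodule.Quotient.mk x₁ : E ⧸ A) = Submodule.Quotient.mk (n • x) ∧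
          (Submodule.Quotient.mk y₁ : E ⧸ A) = Submodule.Quotient.mk w ∧ x₁ ≤ y₁ := by
        rw [hmknsmul, hmkx, hmkw]; exact hab n
      obtain ⟨c, hc, hle⟩ := (hr (n • x) w).mp hrn
      refine hA ((n • x - w) ⊔ 0) c ?_ hc
      rw [abs_of_nonneg (le_sup_right : (0:E) ≤ (n • x - w) ⊔ 0)]
      exact sup_le (le_trans hle (le_abs_self c)) (abs_nonneg c)
    have := h4 x w hx hw key
    rw [← hmkx]
    exact (hmk0 x).mp this
  tfae_finish
end

section
/- For a Riesz space E, the following are equivalent: (1) for all x, y ∈ E with x ≥ 0 and y ≥ 0, there exists a natural number m (depending on x and y) such that x ⊓ (n • y) = x ⊓ (m • y) for all n ≥ m; (2) every principal ideal of E is a projection band. -/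
section Aux

variable {E : Type*} [AddCommGroup E] [Lattice E] [Module ℝ E]
    [CovariantClass E E (· + ·) (· ≤ ·)] [PosSMulMono ℝ E]

private lemma smul_mono_real {l l' : ℝ} (h : l ≤ l') {z : E} (hz : 0 ≤ z) :
    l • z ≤ l' • z := by
  have h0 : 0 ≤ (l' - l) • z := smul_nonneg (by linarith) hz
  calc l • z ≤ l • z + (l' - l) • z := le_add_of_nonneg_right h0
    _ = l' • z := by rw [← add_smul]; ring_nf

private lemma aux_inf_add {a b c : E} (ha : 0 ≤ a) (hb : 0 ≤ b) (hc : 0 ≤ c) :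
    a ⊓ (b + c) ≤ a ⊓ b + a ⊓ c := by
  have hac : (0:E) ≤ a ⊓ c := le_inf ha hc
  rw [inf_add]
  refine le_inf (inf_le_left.trans (le_add_of_nonneg_right hac)) ?_
  rw [add_inf]
  exact le_inf (inf_le_left.trans (le_add_of_nonneg_left hb)) inf_le_right

private lemma aux_nsmul_disj {a b : E} (ha : 0 ≤ a) (hb : 0 ≤ b) (h : a ⊓ b = 0)
    (n : ℕ) : a ⊓ (n • b) = 0 := by
  induction n with
  | zero => simpa using inf_eq_right.2 ha
  | succ k ih =>
      refine le_antisymm ?_ (le_inf ha (nsmul_nonneg hb _))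
      calc a ⊓ ((k + 1) • b) = a ⊓ (k • b + b) := by rw [succ_nsmul]
        _ ≤ a ⊓ (k • b) + a ⊓ b := aux_inf_add ha (nsmul_nonneg hb k) hb
        _ = 0 := by rw [ih, h, add_zero]

private lemma aux_real_disj {a z : E} (ha : 0 ≤ a) (hz : 0 ≤ z) (h : a ⊓ z = 0)
    {l : ℝ} (hl : 0 ≤ l) : a ⊓ (l • z) = 0 := by
  refine le_antisymm ?_ (le_inf ha (smul_nonneg hl hz))
  calc a ⊓ (l • z) ≤ a ⊓ ((⌈l⌉₊ : ℕ) • z) := by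
        refine inf_le_inf_left a ?_
        calc l • z ≤ ((⌈l⌉₊ : ℕ) : ℝ) • z := smul_mono_real (Nat.le_ceil l) hz
          _ = (⌈l⌉₊ : ℕ) • z := Nat.cast_smul_eq_nsmul ℝ _ z
    _ = 0 := aux_nsmul_disj ha hz h _

private lemma aux_key_disj {x z : E} (hx : 0 ≤ x) (hz : 0 ≤ z) (m : ℕ)
    (h : x ⊓ ((m + 1) • z) = x ⊓ (m • z)) : (x - x ⊓ (m • z)) ⊓ z = 0 := by
  set p := x ⊓ (m • z) with hp
  have h1 : (x - p) ⊓ z + p = x ⊓ (z + p) := by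
    rw [inf_add, sub_add_cancel]
  have h2 : z + p = (z + x) ⊓ ((m + 1) • z) := by
    rw [hp, add_inf]
    congr 1
    rw [succ_nsmul, add_comm]
  have h3 : x ⊓ (z + p) = p := by
    rw [h2, ← inf_assoc, inf_eq_left.2 (le_add_of_nonneg_left hz), h]
  have h4 : (x - p) ⊓ z + p = 0 + p := by rw [h1, h3, zero_add]
  exact add_right_cancel h4

end Aux

/-- For a Riesz space `E`, TFAE:
(1) for all `x, y ≥ 0` there is `m : ℕ` with `x ⊓ (n • y) = x ⊓ (m • y)` for
all `n ≥ m`;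
(2) every principal ideal of `E` is a projection band. -/
theorem stmt_14 {E : Type*}
    [AddCommGroup E] [Lattice E] [Module ℝ E]
    [CovariantClass E E (· + ·) (· ≤ ·)] [PosSMulMono ℝ E] :
    (∀ x y : E, 0 ≤ x → 0 ≤ y → ∃ m : ℕ, ∀ n ≥ m, x ⊓ (n • y) = x ⊓ (m • y)) ↔
    (∀ z : E, 0 ≤ z →
      letI Iz : Set E := {x : E | ∃ l : ℝ, 0 < l ∧ |x| ≤ l • z}
      -- `Iz` is a band: suprema of its subsets belong to it
      (∀ (D : Set E) (s : E), D ⊆ Iz → IsLUB D s → s ∈ Iz) ∧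
      -- `E = Iz ⊕ Izᵈ`
      (∀ x : E, ∃ x₁ ∈ Iz, ∃ x₂ : E, (∀ b ∈ Iz, |x₂| ⊓ |b| = 0) ∧ x = x₁ + x₂)) := by
  constructor
  · -- (1) → (2)
    intro h1 z hz
    -- a projection for nonnegative elements
    have proj : ∀ x : E, 0 ≤ x → ∃ p : E, 0 ≤ p ∧ p ≤ x ∧
        (∃ l : ℝ, 0 < l ∧ p ≤ l • z) ∧ (x - p) ⊓ z = 0 := by
      intro x hx
      obtain ⟨m, hm⟩ := h1 x z hx hz
      refine ⟨x ⊓ (m • z), le_inf hx (nsmul_nonneg hz m), inf_le_left,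
        ⟨(m : ℝ) + 1, by positivity, ?_⟩,
        aux_key_disj hx hz m (hm (m + 1) (Nat.le_succ m))⟩
      calc x ⊓ (m • z) ≤ m • z := inf_le_right
        _ = (m : ℝ) • z := (Nat.cast_smul_eq_nsmul ℝ m z).symm
        _ ≤ ((m : ℝ) + 1) • z := smul_mono_real (by linarith) hz
    -- the decomposition (second conjunct)
    have hdec : ∀ x : E, ∃ x₁ ∈ {x : E | ∃ l : ℝ, 0 < l ∧ |x| ≤ l • z},
        ∃ x₂ : E, (∀ b ∈ {x : E | ∃ l : ℝ, 0 < l ∧ |x| ≤ l • z}, |x₂| ⊓ |b| = 0) ∧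
          x = x₁ + x₂ := by
      intro x
      obtain ⟨p, hp0, hpx, ⟨lp, hlp, hplz⟩, hpd⟩ := proj x⁺ (posPart_nonneg x)
      obtain ⟨q, hq0, hqx, ⟨lq, hlq, hqlz⟩, hqd⟩ := proj x⁻ (negPart_nonneg x)
      have ha0 : (0:E) ≤ x⁺ - p := sub_nonneg.2 hpx
      have hb0 : (0:E) ≤ x⁻ - q := sub_nonneg.2 hqx
      refine ⟨p - q, ⟨lp + lq, by linarith, ?_⟩, (x⁺ - p) - (x⁻ - q), ?_, ?_⟩
      · rw [abs_le']
        constructor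
        · calc p - q ≤ p := sub_le_self p hq0
            _ ≤ lp • z := hplz
            _ ≤ (lp + lq) • z := smul_mono_real (by linarith) hz
        · calc -(p - q) = q - p := by abel
            _ ≤ q := sub_le_self q hp0
            _ ≤ lq • z := hqlz
            _ ≤ (lp + lq) • z := smul_mono_real (by linarith) hz
      · rintro b ⟨lb, hlb, hblz⟩
        -- first, |x₂| ⊓ z = 0
        have habs : |(x⁺ - p) - (x⁻ - q)| ≤ (x⁺ - p) + (x⁻ - q) := by
          rw [abs_le']
          constructor
          · calc (x⁺ - p) - (x⁻ - q) = (x⁺ - p) + (-(x⁻ - q)) := by abel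
              _ ≤ (x⁺ - p) + (x⁻ - q) :=
                add_le_add_right ((neg_nonpos.2 hb0).trans hb0) _
          · calc -((x⁺ - p) - (x⁻ - q)) = (x⁻ - q) + (-(x⁺ - p)) := by abel
              _ ≤ (x⁻ - q) + (x⁺ - p) :=
                add_le_add_right ((neg_nonpos.2 ha0).trans ha0) _
              _ = (x⁺ - p) + (x⁻ - q) := by abel
        have hdisj : |(x⁺ - p) - (x⁻ - q)| ⊓ z = 0 := by
          refine le_antisymm ?_ (le_inf (abs_nonneg _) hz)
          calc |(x⁺ - p) - (x⁻ - q)| ⊓ z ≤ ((x⁺ - p) + (x⁻ - q)) ⊓ z :=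
                inf_le_inf_right z habs
            _ = z ⊓ ((x⁺ - p) + (x⁻ - q)) := inf_comm _ _
            _ ≤ z ⊓ (x⁺ - p) + z ⊓ (x⁻ - q) := aux_inf_add hz ha0 hb0
            _ = 0 := by rw [inf_comm z _, inf_comm z _, hpd, hqd, add_zero]
        have hdisj2 : |(x⁺ - p) - (x⁻ - q)| ⊓ (lb • z) = 0 :=
          aux_real_disj (abs_nonneg _) hz hdisj hlb.le
        refine le_antisymm ?_ (le_inf (abs_nonneg _) (abs_nonneg _))
        calc |(x⁺ - p) - (x⁻ - q)| ⊓ |b| ≤ |(x⁺ - p) - (x⁻ - q)| ⊓ (lb • z) :=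
              inf_le_inf_left _ hblz
          _ = 0 := hdisj2
      · calc x = x⁺ - x⁻ := (posPart_sub_negPart x).symm
          _ = (p - q) + ((x⁺ - p) - (x⁻ - q)) := by abel
    refine ⟨?_, hdec⟩
    -- the band property
    intro D s hD hs
    rcases D.eq_empty_or_nonempty with hDe | ⟨d₀, hd₀⟩
    · -- empty: s is the least element, so s = 0
      subst hDe
      have h0 : s ≤ 0 := hs.2 (by simp)
      have h2 : s ≤ s + s := hs.2 (by simp)
      have h0' : 0 ≤ s := by
        have := le_add_iff_nonneg_left (a := s) (b := s)
        exact this.1 h2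
      have : s = 0 := le_antisymm h0 h0'
      exact ⟨1, one_pos, by simp [this, hz]⟩
    · obtain ⟨l₀, hl₀, hd₀z⟩ := hD hd₀
      obtain ⟨s₁, ⟨l₁, hl₁, hs₁⟩, s₂, hs₂, hsum⟩ := hdec s
      have hub : ∀ d ∈ D, d ≤ s₁ := by
        intro d hd
        obtain ⟨ld, hld, hdz⟩ := hD hd
        have h1 : d - s₁ ≤ |s₂| := by
          calc d - s₁ ≤ s - s₁ := sub_le_sub_right (hs.1 hd) s₁
            _ = s₂ := by rw [hsum]; abel
            _ ≤ |s₂| := le_abs_self s₂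
        set b := (d - s₁)⁺ with hb
        have hb0 : (0:E) ≤ b := posPart_nonneg _
        have hble : b ≤ |s₂| := sup_le h1 (abs_nonneg _)
        have hbz : b ≤ (ld + l₁) • z := by
          refine sup_le ?_ ?_
          · calc d - s₁ = d + -s₁ := sub_eq_add_neg d s₁
              _ ≤ ld • z + l₁ • z :=
                add_le_add ((le_abs_self d).trans hdz)
                  ((neg_le_abs s₁).trans hs₁)
              _ = (ld + l₁) • z := (add_smul ld l₁ z).symm
          · exact smul_nonneg (by linarith) hz
        have hbmem : b ∈ {x : E | ∃ l : ℝ, 0 < l ∧ |x| ≤ l • z} :=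
          ⟨ld + l₁, by linarith, by rwa [abs_of_nonneg hb0]⟩
        have hzero : |s₂| ⊓ |b| = 0 := hs₂ b hbmem
        have hbzero : b = 0 := by
          have : b ≤ |s₂| ⊓ |b| := le_inf hble (le_abs_self b)
          exact le_antisymm (this.trans_eq hzero) hb0
        have : d - s₁ ≤ b := le_sup_left
        rw [hbzero] at this
        exact sub_nonpos.1 this
      have hss₁ : s ≤ s₁ := hs.2 hub
      refine ⟨l₀ + l₁, by linarith, ?_⟩
      rw [abs_le']
      constructor
      · calc s ≤ s₁ := hss₁
          _ ≤ |s₁| := le_abs_self s₁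
          _ ≤ l₁ • z := hs₁
          _ ≤ (l₀ + l₁) • z := smul_mono_real (by linarith) hz
      · calc -s ≤ -d₀ := neg_le_neg_iff.2 (hs.1 hd₀)
          _ ≤ |d₀| := neg_le_abs d₀
          _ ≤ l₀ • z := hd₀z
          _ ≤ (l₀ + l₁) • z := smul_mono_real (by linarith) hz
  · -- (2) → (1)
    intro h2 x y hx hy
    obtain ⟨-, hproj⟩ := h2 y hy
    obtain ⟨x₁, ⟨l, hl, hx₁⟩, x₂, hx₂, hsum⟩ := hproj x
    refine ⟨⌈l⌉₊, fun n hn => ?_⟩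
    have hmy : x₁ ≤ (⌈l⌉₊ : ℕ) • y := by
      calc x₁ ≤ |x₁| := le_abs_self x₁
        _ ≤ l • y := hx₁
        _ ≤ ((⌈l⌉₊ : ℕ) : ℝ) • y := smul_mono_real (Nat.le_ceil l) hy
        _ = (⌈l⌉₊ : ℕ) • y := Nat.cast_smul_eq_nsmul ℝ _ y
    have key : ∀ k : ℕ, x ⊓ (k • y) ≤ x₁ := by
      intro k
      have hxk0 : (0:E) ≤ x ⊓ (k • y) := le_inf hx (nsmul_nonneg hy k)
      set b := (x ⊓ (k • y) - x₁)⁺ with hb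
      have hb0 : (0:E) ≤ b := posPart_nonneg _
      have hble : b ≤ |x₂| := by
        refine sup_le ?_ (abs_nonneg _)
        calc x ⊓ (k • y) - x₁ ≤ x - x₁ := sub_le_sub_right inf_le_left x₁
          _ = x₂ := by rw [hsum]; abel
          _ ≤ |x₂| := le_abs_self x₂
      have hbz : b ≤ ((k : ℝ) + l) • y := by
        refine sup_le ?_ (smul_nonneg (by positivity) hy)
        calc x ⊓ (k • y) - x₁ = x ⊓ (k • y) + -x₁ := sub_eq_add_neg _ _
          _ ≤ k • y + l • y :=
              add_le_add inf_le_right ((neg_le_abs x₁).trans hx₁)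
          _ = (k : ℝ) • y + l • y := by rw [Nat.cast_smul_eq_nsmul ℝ k y]
          _ = ((k : ℝ) + l) • y := (add_smul _ _ y).symm
      have hbmem : b ∈ {x : E | ∃ l' : ℝ, 0 < l' ∧ |x| ≤ l' • y} :=
        ⟨(k : ℝ) + l, by positivity, by rwa [abs_of_nonneg hb0]⟩
      have hzero : |x₂| ⊓ |b| = 0 := hx₂ b hbmem
      have hbzero : b = 0 := by
        have : b ≤ |x₂| ⊓ |b| := le_inf hble (le_abs_self b)
        exact le_antisymm (this.trans_eq hzero) hb0
      have : x ⊓ (k • y) - x₁ ≤ b := le_sup_left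
      rw [hbzero] at this
      exact sub_nonpos.1 this
    refine le_antisymm ?_ (inf_le_inf_left x (nsmul_le_nsmul_left hy hn))
    exact le_inf inf_le_left ((key n).trans hmy)
end

section
/- For a Riesz space E, the following are equivalent: (1) every positive linear operator from E into an arbitrary Archimedean Riesz space is σ-order continuous; (2) every Riesz homomorphism from E into an arbitrary Archimedean Riesz space is σ-order continuous; (3) every uniformly closed ideal of E is a σ-ideal. -/
universe u

set_option linter.unusedSectionVars false


section RieszAux

variable {G : Type*} [AddCommGroup G] [Lattice G]
  [CovariantClass G G (· + ·) (· ≤ ·)]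

private lemma pp_mono' {a b : G} (h : a ≤ b) : a ⊔ 0 ≤ b ⊔ 0 :=
  sup_le_sup_right h 0

private lemma pp_nonneg' (a : G) : (0 : G) ≤ a ⊔ 0 := le_sup_right

private lemma le_pp' (a : G) : a ≤ a ⊔ 0 := le_sup_left

private lemma pp_add_le' (a b : G) : (a + b) ⊔ 0 ≤ (a ⊔ 0) + (b ⊔ 0) :=
  sup_le (add_le_add le_sup_left le_sup_left)
    (add_nonneg le_sup_right le_sup_right)

private lemma pp_sub_le' (a b c : G) :
    (a - c) ⊔ 0 ≤ ((a - b) ⊔ 0) + ((b - c) ⊔ 0) := by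
  have h : a - c = (a - b) + (b - c) := by abel
  rw [h]; exact pp_add_le' _ _

private lemma sub_inf_eq_pp' (a b : G) : a - a ⊓ b = (a - b) ⊔ 0 := by
  rw [sub_inf, sub_self, sup_comm]

private lemma pp_eq_zero' {a : G} (h : a ≤ 0) : a ⊔ 0 = 0 := sup_eq_right.2 h

private lemma pp_pp_eq_pp' (a b : G) : (a ⊔ b) ⊔ 0 = (a ⊔ 0) ⊔ (b ⊔ 0) := by
  rw [sup_sup_sup_comm, sup_idem]

private lemma abs_pp_sub_pp_le' (a b : G) : |a ⊔ 0 - b ⊔ 0| ≤ |a - b| :=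
  abs_sup_sub_sup_le_abs a b 0

private lemma pp_decomp' (a : G) : a = (a ⊔ 0) - ((-a) ⊔ 0) := by
  have h := posPart_sub_negPart a
  rw [posPart_def, negPart_def] at h
  exact h.symm

private lemma pp_disj' (a : G) : (a ⊔ 0) ⊓ ((-a) ⊔ 0) = 0 := by
  have h := posPart_inf_negPart_eq_zero a
  rwa [posPart_def, negPart_def] at h

private lemma abs_sup_sup_le' (a b a' b' : G) :
    |a ⊔ b - (a' ⊔ b')| ≤ |a - a'| + |b - b'| := by
  have h1 : |a ⊔ b - (a' ⊔ b')| ≤ |a ⊔ b - (a' ⊔ b)| + |a' ⊔ b - (a' ⊔ b')| := by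
    have h : a ⊔ b - (a' ⊔ b') = (a ⊔ b - (a' ⊔ b)) + (a' ⊔ b - (a' ⊔ b')) := by abel
    rw [h]; exact abs_add_le _ _
  have h2 : |a ⊔ b - (a' ⊔ b)| ≤ |a - a'| := abs_sup_sub_sup_le_abs a a' b
  have h3 : |a' ⊔ b - (a' ⊔ b')| ≤ |b - b'| := by
    rw [sup_comm a' b, sup_comm a' b']; exact abs_sup_sub_sup_le_abs b b' a'
  exact h1.trans (add_le_add h2 h3)

variable [Module ℝ G] [PosSMulMono ℝ G]

private lemma smul_le_smul_right'' {c d : ℝ} (h : c ≤ d) {a : G} (ha : 0 ≤ a) :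
    c • a ≤ d • a := by
  calc c • a ≤ c • a + (d - c) • a :=
        le_add_of_nonneg_right (smul_nonneg (by linarith) ha)
    _ = d • a := by rw [← add_smul, add_sub_cancel]

private lemma smul_sup₀' {c : ℝ} (hc : 0 < c) (a b : G) :
    c • (a ⊔ b) = c • a ⊔ c • b := by
  apply le_antisymm
  · have h1 : a ⊔ b ≤ c⁻¹ • (c • a ⊔ c • b) := by
      apply sup_le
      · have := smul_le_smul_of_nonneg_left (le_sup_left : c • a ≤ c • a ⊔ c • b)
          (inv_nonneg.2 hc.le)
        simpa [smul_smul, inv_mul_cancel₀ hc.ne'] using this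
      · have := smul_le_smul_of_nonneg_left (le_sup_right : c • b ≤ c • a ⊔ c • b)
          (inv_nonneg.2 hc.le)
        simpa [smul_smul, inv_mul_cancel₀ hc.ne'] using this
    have := smul_le_smul_of_nonneg_left h1 hc.le
    simpa [smul_smul, mul_inv_cancel₀ hc.ne'] using this
  · exact sup_le (smul_le_smul_of_nonneg_left le_sup_left hc.le)
      (smul_le_smul_of_nonneg_left le_sup_right hc.le)

private lemma smul_inf₀' {c : ℝ} (hc : 0 < c) (a b : G) :
    c • (a ⊓ b) = c • a ⊓ c • b := by
  apply le_antisymm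
  · exact le_inf (smul_le_smul_of_nonneg_left inf_le_left hc.le)
      (smul_le_smul_of_nonneg_left inf_le_right hc.le)
  · have h1 : c⁻¹ • (c • a ⊓ c • b) ≤ a ⊓ b := by
      apply le_inf
      · have := smul_le_smul_of_nonneg_left (inf_le_left : c • a ⊓ c • b ≤ c • a)
          (inv_nonneg.2 hc.le)
        simpa [smul_smul, inv_mul_cancel₀ hc.ne'] using this
      · have := smul_le_smul_of_nonneg_left (inf_le_right : c • a ⊓ c • b ≤ c • b)
          (inv_nonneg.2 hc.le)
        simpa [smul_smul, inv_mul_cancel₀ hc.ne'] using this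
    have := smul_le_smul_of_nonneg_left h1 hc.le
    simpa [smul_smul, mul_inv_cancel₀ hc.ne'] using this

private lemma smul_pp' {c : ℝ} (hc : 0 ≤ c) (a : G) :
    c • (a ⊔ 0) = (c • a) ⊔ 0 := by
  rcases hc.eq_or_lt with h | h
  · simp [← h]
  · rw [smul_sup₀' h, smul_zero]

private lemma abs_smul_le' (c : ℝ) (a : G) : |c • a| ≤ |c| • |a| := by
  have habs : ∀ d : ℝ, 0 ≤ d → ∀ x : G, d • x ≤ d • |x| := fun d hd x =>
    smul_le_smul_of_nonneg_left (le_abs_self x) hd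
  rcases le_total 0 c with h | h
  · rw [abs_of_nonneg h]
    refine abs_le'.2 ⟨habs c h a, ?_⟩
    have : -(c • a) = c • (-a) := by rw [smul_neg]
    rw [this, ← abs_neg a]
    exact habs c h (-a)
  · rw [abs_of_nonpos h]
    refine abs_le'.2 ⟨?_, ?_⟩
    · have : c • a = (-c) • (-a) := by rw [neg_smul, smul_neg, neg_neg]
      rw [this, ← abs_neg a]
      exact habs (-c) (by linarith) (-a)
    · have : -(c • a) = (-c) • a := by rw [neg_smul]
      rw [this]
      exact habs (-c) (by linarith) a

/-- The key lattice inequality for (3) → (1). -/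
private lemma key_ineq' {u v : G} (hv : 0 ≤ v) (hvu : v ≤ u) {l K : ℝ}
    (hl : 0 ≤ l) (hK : 0 < K) :
    v - K⁻¹ • u ≤ (u - l • ((u - K • v) ⊔ 0)) ⊔ 0 := by
  set a : G := u - K • v with ha
  set p : G := a ⊔ 0 with hp
  set q : G := (-a) ⊔ 0 with hq
  have hq0 : (0 : G) ≤ q := le_sup_right
  have hp0 : (0 : G) ≤ p := le_sup_right
  have hu0 : (0 : G) ≤ u := hv.trans hvu
  have hpq : p ⊓ q = 0 := pp_disj' a
  set t : G := v - K⁻¹ • u with hts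
  have ht1 : t ≤ K⁻¹ • q := by
    have h1 : K • v - u ≤ q := by
      have h : K • v - u = -a := by rw [ha, neg_sub]
      rw [h]; exact le_sup_left
    have h2 := smul_le_smul_of_nonneg_left h1 (inv_nonneg.2 hK.le)
    calc t = K⁻¹ • (K • v - u) := by
          rw [smul_sub, smul_smul, inv_mul_cancel₀ hK.ne', one_smul]
      _ ≤ K⁻¹ • q := h2
  have htv : t ≤ v := sub_le_self _ (smul_nonneg (inv_nonneg.2 hK.le) hu0)
  have htpu : t ⊔ 0 ≤ u := (sup_le htv hv).trans hvu
  have htq : t ⊔ 0 ≤ K⁻¹ • q := sup_le ht1 (smul_nonneg (inv_nonneg.2 hK.le) hq0)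
  have hdisj : (t ⊔ 0) ⊓ (l • p) = 0 := by
    set M : ℝ := max K⁻¹ l with hM
    have hM0 : 0 < M := lt_of_lt_of_le (inv_pos.2 hK) (le_max_left _ _)
    apply le_antisymm
    · calc (t ⊔ 0) ⊓ (l • p) ≤ (K⁻¹ • q) ⊓ (l • p) := inf_le_inf_right _ htq
        _ ≤ (M • q) ⊓ (M • p) :=
            inf_le_inf (smul_le_smul_right'' (le_max_left _ _) hq0)
              (smul_le_smul_right'' (le_max_right _ _) hp0)
        _ = M • (q ⊓ p) := (smul_inf₀' hM0 q p).symm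
        _ = 0 := by rw [inf_comm, hpq, smul_zero]
    · exact le_inf (pp_nonneg' t) (smul_nonneg hl hp0)
  have hfin : t ⊔ 0 - ((u - l • p) ⊔ 0) ≤ 0 := by
    have h1 : t ⊔ 0 - ((u - l • p) ⊔ 0) ≤ l • p := by
      have h2 : t ⊔ 0 - ((u - l • p) ⊔ 0) ≤ t ⊔ 0 - (u - l • p) :=
        sub_le_sub_left le_sup_left _
      refine h2.trans ?_
      have h3 : t ⊔ 0 - (u - l • p) = (t ⊔ 0 - u) + l • p := by abel
      rw [h3]
      calc (t ⊔ 0 - u) + l • p ≤ 0 + l • p :=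
            add_le_add_left (sub_nonpos.2 htpu) _
        _ = l • p := zero_add _
    have h4 : t ⊔ 0 - ((u - l • p) ⊔ 0) ≤ t ⊔ 0 := sub_le_self _ le_sup_right
    calc t ⊔ 0 - ((u - l • p) ⊔ 0) ≤ (t ⊔ 0) ⊓ (l • p) := le_inf h4 h1
      _ = 0 := hdisj
  exact (le_sup_left : t ≤ t ⊔ 0).trans (sub_nonpos.1 hfin)

end RieszAux


/-- For a Riesz space `E`, TFAE:
(1) every positive linear operator from `E` into an arbitrary Archimedean Riesz
space is σ-order continuous;
(2) every Riesz homomorphism from `E` into an arbitrary Archimedean Riesz space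
is σ-order continuous;
(3) every uniformly closed ideal of `E` is a σ-ideal. -/
theorem stmt_15 {E : Type u}
    [AddCommGroup E] [Lattice E] [Module ℝ E]
    [CovariantClass E E (· + ·) (· ≤ ·)] [PosSMulMono ℝ E] :
    List.TFAE [
      -- (1) every positive operator into an Archimedean Riesz space is
      -- σ-order continuous
      ∀ (F : Type u) [AddCommGroup F] [Lattice F] [Module ℝ F]
        [CovariantClass F F (· + ·) (· ≤ ·)] [PosSMulMono ℝ F],
        (∀ x y : F, 0 ≤ x → 0 ≤ y → (∀ n : ℕ, n • x ≤ y) → x = 0) →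
        ∀ T : E →ₗ[ℝ] F, (∀ x : E, 0 ≤ x → 0 ≤ T x) →
        ∀ u : ℕ → E,
          (∃ y : ℕ → E, (∀ n, |u n| ≤ y n) ∧ Antitone y ∧ IsGLB (Set.range y) 0) →
          (∃ z : ℕ → F, (∀ n, |T (u n)| ≤ z n) ∧ Antitone z ∧ IsGLB (Set.range z) 0),
      -- (2) every Riesz homomorphism into an Archimedean Riesz space is
      -- σ-order continuous
      ∀ (F : Type u) [AddCommGroup F] [Lattice F] [Module ℝ F]
        [CovariantClass F F (· + ·) (· ≤ ·)] [PosSMulMono ℝ F],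
        (∀ x y : F, 0 ≤ x → 0 ≤ y → (∀ n : ℕ, n • x ≤ y) → x = 0) →
        ∀ T : E →ₗ[ℝ] F, (∀ x y : E, T (x ⊔ y) = T x ⊔ T y) →
        ∀ u : ℕ → E,
          (∃ y : ℕ → E, (∀ n, |u n| ≤ y n) ∧ Antitone y ∧ IsGLB (Set.range y) 0) →
          (∃ z : ℕ → F, (∀ n, |T (u n)| ≤ z n) ∧ Antitone z ∧ IsGLB (Set.range z) 0),
      -- (3) every uniformly closed ideal of `E` is a σ-ideal
      ∀ A : Submodule ℝ E, (∀ x y : E, |x| ≤ |y| → y ∈ A → x ∈ A) →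
        (∀ (u : ℕ → E) (x : E), (∀ n, u n ∈ A) →
          (∃ w : E, 0 ≤ w ∧ ∀ ε : ℝ, 0 < ε → ∃ N : ℕ, ∀ n ≥ N, |x - u n| ≤ ε • w) →
          x ∈ A) →
        ∀ (u : ℕ → E) (x : E), (∀ n, u n ∈ A) → (∀ n, 0 ≤ u n) → Monotone u →
          IsLUB (Set.range u) x → x ∈ A] := by
  tfae_have 1 → 2 := by
    intro h1 F _ _ _ _ _ harch T hhom u hu
    refine h1 F harch T ?_ u hu
    intro a ha
    have h := hhom a 0
    rw [map_zero, sup_eq_left.2 ha] at h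
    exact h ▸ le_sup_right
  tfae_have 3 → 1 := by
    intro h3 F _ _ _ _ _ harch T hT u ⟨y, hyd, hya, hyg⟩
    have hTm : ∀ {a b : E}, a ≤ b → T a ≤ T b := by
      intro a b h
      have h0 := hT (b - a) (sub_nonneg.2 h)
      rw [map_sub] at h0
      exact sub_nonneg.1 h0
    have hy0 : ∀ n, 0 ≤ y n := fun n => hyg.1 ⟨n, rfl⟩
    refine ⟨fun n => T (y n), ?_, ?_, ?_, ?_⟩
    · intro n
      refine abs_le'.2 ⟨hTm ((le_abs_self _).trans (hyd n)), ?_⟩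
      have h1 : -(u n) ≤ y n := (neg_le_abs _).trans (hyd n)
      have h2 := hTm h1
      rwa [map_neg] at h2
    · intro m n hmn
      exact hTm (hya hmn)
    · rintro t ⟨n, rfl⟩
      exact hT _ (hy0 n)
    · rintro b hb
      have hbn : ∀ n, b ≤ T (y n) := fun n => hb ⟨n, rfl⟩
      have hTy0 : 0 ≤ T (y 0) := hT _ (hy0 0)
      have hkey : ∀ k : ℕ, b ≤ ((k : ℝ) + 1)⁻¹ • T (y 0) := by
        intro k
        set K : ℝ := (k : ℝ) + 1 with hKdef
        have hK : (0 : ℝ) < K := by positivity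
        set p : ℕ → E := fun n => (y 0 - K • y n) ⊔ 0 with hpdef
        have hpmono : Monotone p := by
          intro m n hmn
          exact pp_mono' (sub_le_sub_left
            (smul_le_smul_of_nonneg_left (hya hmn) hK.le) _)
        have hp0 : ∀ n, 0 ≤ p n := fun n => pp_nonneg' _
        let Ak : Submodule ℝ E :=
          { carrier := {x : E | ∀ s : F, 0 ≤ s →
              (∀ (n : ℕ) (l : ℝ), 0 ≤ l → s ≤ T ((|x| - l • p n) ⊔ 0)) → s ≤ 0}
            zero_mem' := by
              intro s hs hyp
              have h := hyp 0 0 le_rfl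
              simpa using h
            add_mem' := by
              intro a c ha hc s hs hyp
              have key : ∀ (n1 n2 : ℕ) (l1 l2 : ℝ), 0 ≤ l1 → 0 ≤ l2 →
                  s ≤ T ((|a| - l1 • p n1) ⊔ 0) + T ((|c| - l2 • p n2) ⊔ 0) := by
                intro n1 n2 l1 l2 hl1 hl2
                have step := hyp (max n1 n2) (l1 + l2) (by positivity)
                have hiq : (|a + c| - (l1 + l2) • p (max n1 n2)) ⊔ 0 ≤
                    ((|a| - l1 • p (max n1 n2)) ⊔ 0) +
                    ((|c| - l2 • p (max n1 n2)) ⊔ 0) := by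
                  have h1 : |a + c| - (l1 + l2) • p (max n1 n2) ≤
                      (|a| - l1 • p (max n1 n2)) + (|c| - l2 • p (max n1 n2)) := by
                    have h2 : |a + c| ≤ |a| + |c| := abs_add_le _ _
                    rw [add_smul]
                    have h4 := sub_le_sub_right h2
                      (l1 • p (max n1 n2) + l2 • p (max n1 n2))
                    refine h4.trans (le_of_eq ?_)
                    abel
                  exact (pp_mono' h1).trans (pp_add_le' _ _)
                have hTq := hTm hiq
                rw [map_add] at hTq
                refine (step.trans hTq).trans ?_
                have hs1 : T ((|a| - l1 • p (max n1 n2)) ⊔ 0) ≤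
                    T ((|a| - l1 • p n1) ⊔ 0) :=
                  hTm (pp_mono' (sub_le_sub_left
                    (smul_le_smul_of_nonneg_left (hpmono (le_max_left _ _)) hl1) _))
                have hs2 : T ((|c| - l2 • p (max n1 n2)) ⊔ 0) ≤
                    T ((|c| - l2 • p n2) ⊔ 0) :=
                  hTm (pp_mono' (sub_le_sub_left
                    (smul_le_smul_of_nonneg_left (hpmono (le_max_right _ _)) hl2) _))
                exact add_le_add hs1 hs2
              have hstep2 : ∀ (n2 : ℕ) (l2 : ℝ), 0 ≤ l2 →
                  s ≤ T ((|c| - l2 • p n2) ⊔ 0) := by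
                intro n2 l2 hl2
                have h0 : ∀ (n1 : ℕ) (l1 : ℝ), 0 ≤ l1 →
                    (s - T ((|c| - l2 • p n2) ⊔ 0)) ⊔ 0 ≤
                    T ((|a| - l1 • p n1) ⊔ 0) := by
                  intro n1 l1 hl1
                  exact sup_le (sub_le_iff_le_add.2 (key n1 n2 l1 l2 hl1 hl2))
                    (hT _ (pp_nonneg' _))
                have h1 := ha _ (pp_nonneg' _) h0
                exact sub_nonpos.1 (le_trans le_sup_left h1)
              exact hc s hs hstep2
            smul_mem' := by
              intro c a ha s hs hyp
              rcases eq_or_ne c 0 with rfl | hc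
              · have h := hyp 0 0 le_rfl
                simpa using h
              · have hm0 : (0 : ℝ) < |c| := abs_pos.2 hc
                have key : ∀ (n : ℕ) (l : ℝ), 0 ≤ l →
                    |c|⁻¹ • s ≤ T ((|a| - l • p n) ⊔ 0) := by
                  intro n l hl
                  have step := hyp n (|c| * l) (by positivity)
                  have h1 : (|c • a| - (|c| * l) • p n) ⊔ 0 ≤
                      (|c| • |a| - (|c| * l) • p n) ⊔ 0 :=
                    pp_mono' (sub_le_sub_right (abs_smul_le' c a) _)
                  have h2 : (|c| • |a| - (|c| * l) • p n) ⊔ 0 =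
                      |c| • ((|a| - l • p n) ⊔ 0) := by
                    rw [smul_pp' hm0.le, smul_sub, smul_smul]
                  have h3 : s ≤ |c| • T ((|a| - l • p n) ⊔ 0) := by
                    have h4 := (step.trans (hTm h1)).trans (le_of_eq (congrArg T h2))
                    rwa [map_smul] at h4
                  have h5 := smul_le_smul_of_nonneg_left h3 (inv_nonneg.2 hm0.le)
                  rwa [smul_smul, inv_mul_cancel₀ hm0.ne', one_smul] at h5
                have h4 := ha _ (smul_nonneg (inv_nonneg.2 hm0.le) hs) key
                have h5 := smul_le_smul_of_nonneg_left h4 hm0.le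
                rwa [smul_smul, mul_inv_cancel₀ hm0.ne', one_smul, smul_zero] at h5 }
        have hidl : ∀ x z : E, |x| ≤ |z| → z ∈ Ak → x ∈ Ak := by
          intro x z hxz hz s hs hyp
          exact hz s hs fun n l hl =>
            (hyp n l hl).trans (hTm (pp_mono' (sub_le_sub_right hxz _)))
        have hcl : ∀ (v : ℕ → E) (x : E), (∀ n, v n ∈ Ak) →
            (∃ w : E, 0 ≤ w ∧ ∀ ε : ℝ, 0 < ε → ∃ N : ℕ, ∀ n ≥ N, |x - v n| ≤ ε • w) →
            x ∈ Ak := by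
          intro v x hv hex
          obtain ⟨w, hw0, hwc⟩ := hex
          intro s hs hyp
          have hTw : 0 ≤ T w := hT w hw0
          have heps : ∀ ε : ℝ, 0 < ε → s ≤ ε • T w := by
            intro ε hε
            obtain ⟨N, hN⟩ := hwc ε hε
            have hxv : |x - v N| ≤ ε • w := hN N le_rfl
            have h0 : ∀ (n : ℕ) (l : ℝ), 0 ≤ l →
                (s - ε • T w) ⊔ 0 ≤ T ((|v N| - l • p n) ⊔ 0) := by
              intro n l hl
              refine sup_le (sub_le_iff_le_add.2 ?_) (hT _ (pp_nonneg' _))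
              have h1 : |x| ≤ |v N| + ε • w := by
                have h2 := abs_add_le (v N) (x - v N)
                rw [add_sub_cancel] at h2
                exact h2.trans (add_le_add_right hxv _)
              have h2 : (|x| - l • p n) ⊔ 0 ≤ ((|v N| - l • p n) ⊔ 0) + ε • w := by
                have h3 : |x| - l • p n ≤ (|v N| - l • p n) + ε • w := by
                  have h4 := sub_le_sub_right h1 (l • p n)
                  refine h4.trans (le_of_eq ?_)
                  abel
                refine (pp_mono' h3).trans ?_
                refine (pp_add_le' _ _).trans ?_
                exact add_le_add_right (sup_le le_rfl (smul_nonneg hε.le hw0)) _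
              have h4 := hTm h2
              rw [map_add, map_smul] at h4
              exact (hyp n l hl).trans h4
            have h5 := hv N _ (pp_nonneg' _) h0
            exact sub_nonpos.1 (le_trans le_sup_left h5)
          have harch' : ∀ n : ℕ, n • s ≤ T w := by
            intro n
            cases n with
            | zero => simpa using hTw
            | succ m =>
              have hc : (0 : ℝ) < ((m + 1 : ℕ) : ℝ) := by exact_mod_cast Nat.succ_pos m
              have h7 := heps ((m + 1 : ℕ) : ℝ)⁻¹ (inv_pos.2 hc)
              have h8 := smul_le_smul_of_nonneg_left h7 hc.le
              rw [smul_smul, mul_inv_cancel₀ hc.ne', one_smul] at h8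
              rwa [Nat.cast_smul_eq_nsmul] at h8
          exact le_of_eq (harch s (T w) hs hTw harch')
        have hpmem : ∀ n, p n ∈ Ak := by
          intro n s hs hyp
          have h := hyp n 1 zero_le_one
          rw [abs_of_nonneg (hp0 n), one_smul, sub_self] at h
          simpa using h
        have hlub : IsLUB (Set.range p) (y 0) := by
          constructor
          · rintro t ⟨n, rfl⟩
            exact sup_le (sub_le_self _ (smul_nonneg hK.le (hy0 n))) (hy0 0)
          · intro t ht
            have h1 : ∀ n, K⁻¹ • (y 0 - t) ≤ y n := by
              intro n
              have h2 : y 0 - K • y n ≤ t := le_trans le_sup_left (ht ⟨n, rfl⟩)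
              have h3 : y 0 - t ≤ K • y n := sub_le_comm.1 h2
              have h4 := smul_le_smul_of_nonneg_left h3 (inv_nonneg.2 hK.le)
              rwa [smul_smul, inv_mul_cancel₀ hK.ne', one_smul] at h4
            have h4 : K⁻¹ • (y 0 - t) ≤ 0 := by
              refine hyg.2 ?_
              rintro r ⟨n, rfl⟩
              exact h1 n
            have h5 := smul_le_smul_of_nonneg_left h4 hK.le
            rw [smul_smul, mul_inv_cancel₀ hK.ne', one_smul, smul_zero] at h5
            exact sub_nonpos.1 h5
        have hy0Ak : y 0 ∈ Ak := h3 Ak hidl hcl p (y 0) hpmem hp0 hpmono hlub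
        have hprem : ∀ (n : ℕ) (l : ℝ), 0 ≤ l →
            (b - K⁻¹ • T (y 0)) ⊔ 0 ≤ T ((|y 0| - l • p n) ⊔ 0) := by
          intro n l hl
          have hki := key_ineq' (hy0 n) (hya (Nat.zero_le n)) hl hK
          have h1 := hTm hki
          rw [map_sub, map_smul] at h1
          refine sup_le ?_ (hT _ (pp_nonneg' _))
          have h2 : b - K⁻¹ • T (y 0) ≤ T (y n) - K⁻¹ • T (y 0) :=
            sub_le_sub_right (hbn n) _
          rw [abs_of_nonneg (hy0 0)]
          exact h2.trans h1
        have hs0le := hy0Ak _ (pp_nonneg' _) hprem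
        exact sub_nonpos.1 (le_trans le_sup_left hs0le)
      have hb0 : ∀ n : ℕ, n • (b ⊔ 0) ≤ T (y 0) := by
        intro n
        have h1 := hkey n
        have hn1 : (0 : ℝ) < (n : ℝ) + 1 := by positivity
        have h2 : b ⊔ 0 ≤ ((n : ℝ) + 1)⁻¹ • T (y 0) :=
          sup_le h1 (smul_nonneg (inv_nonneg.2 hn1.le) hTy0)
        have h3 := smul_le_smul_of_nonneg_left h2 hn1.le
        rw [smul_smul, mul_inv_cancel₀ hn1.ne', one_smul] at h3
        have h4 : (n : ℝ) • (b ⊔ 0) ≤ ((n : ℝ) + 1) • (b ⊔ 0) :=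
          smul_le_smul_right'' (by linarith) (pp_nonneg' _)
        have h5 := h4.trans h3
        rwa [Nat.cast_smul_eq_nsmul] at h5
      have h5 := harch (b ⊔ 0) (T (y 0)) (pp_nonneg' _) hTy0 hb0
      exact le_sup_left.trans (le_of_eq h5)
  tfae_have 2 → 3 := by
    intro h2 A hidl hcl u x hu hupos humono hlub
    classical
    have hsur : Function.Surjective (Submodule.Quotient.mk (p := A)) :=
      Submodule.Quotient.mk_surjective A
    choose rep hrep using hsur
    have memOfLe : ∀ {v z : E}, 0 ≤ v → v ≤ z → z ∈ A → v ∈ A := by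
      intro v z hv hvz hz
      exact hidl v z
        (by rw [abs_of_nonneg hv, abs_of_nonneg (hv.trans hvz)]; exact hvz) hz
    have hEq : ∀ {a b : E},
        (Submodule.Quotient.mk a : E ⧸ A) = Submodule.Quotient.mk b ↔ a - b ∈ A :=
      fun {a b} => Submodule.Quotient.eq A
    have tr : ∀ {a b a' b' : E},
        (Submodule.Quotient.mk a : E ⧸ A) = Submodule.Quotient.mk a' →
        (Submodule.Quotient.mk b : E ⧸ A) = Submodule.Quotient.mk b' →
        ((a - b) ⊔ 0) ∈ A → ((a' - b') ⊔ 0) ∈ A := by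
      intro a b a' b' ha hb hm
      have h1 : (a - a') - (b - b') ∈ A := A.sub_mem (hEq.1 ha) (hEq.1 hb)
      have h3 : (a' - b') - (a - b) ∈ A := by
        have he : (a' - b') - (a - b) = -((a - a') - (b - b')) := by abel
        rw [he]; exact A.neg_mem h1
      have h4 : ((a' - b') ⊔ 0) - ((a - b) ⊔ 0) ∈ A :=
        hidl _ _ (abs_pp_sub_pp_le' _ _) h3
      have h5 := A.add_mem h4 hm
      rwa [sub_add_cancel] at h5
    letI instPO : PartialOrder (E ⧸ A) :=
      { le := fun ξ η => ((rep ξ - rep η) ⊔ 0) ∈ A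
        le_refl := fun ξ => by
          simp only [sub_self, sup_idem]
          exact A.zero_mem
        le_trans := fun ξ η ζ h1 h2 =>
          memOfLe (pp_nonneg' _) (pp_sub_le' _ (rep η) _) (A.add_mem h1 h2)
        le_antisymm := fun ξ η h1 h2 => by
          have hd : rep ξ - rep η ∈ A := by
            have he := pp_decomp' (rep ξ - rep η)
            rw [neg_sub] at he
            rw [he]
            exact A.sub_mem h1 h2
          calc ξ = Submodule.Quotient.mk (rep ξ) := (hrep ξ).symm
            _ = Submodule.Quotient.mk (rep η) := hEq.2 hd
            _ = η := hrep η }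
    have le_iff : ∀ {a b : E},
        (Submodule.Quotient.mk a : E ⧸ A) ≤ Submodule.Quotient.mk b ↔
        ((a - b) ⊔ 0) ∈ A := by
      intro a b
      constructor
      · intro h
        exact tr (hrep _) (hrep _) h
      · intro h
        exact tr (hrep _).symm (hrep _).symm h
    letI instLat : Lattice (E ⧸ A) :=
      { instPO with
        sup := fun ξ η => Submodule.Quotient.mk (rep ξ ⊔ rep η)
        le_sup_left := fun ξ η => by
          have h : (Submodule.Quotient.mk (rep ξ) : E ⧸ A) ≤
              Submodule.Quotient.mk (rep ξ ⊔ rep η) :=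
            le_iff.2 (by
              rw [pp_eq_zero' (sub_nonpos.2 le_sup_left)]
              exact A.zero_mem)
          rwa [hrep ξ] at h
        le_sup_right := fun ξ η => by
          have h : (Submodule.Quotient.mk (rep η) : E ⧸ A) ≤
              Submodule.Quotient.mk (rep ξ ⊔ rep η) :=
            le_iff.2 (by
              rw [pp_eq_zero' (sub_nonpos.2 le_sup_right)]
              exact A.zero_mem)
          rwa [hrep η] at h
        sup_le := fun ξ η ζ h1 h2 => by
          have h : (Submodule.Quotient.mk (rep ξ ⊔ rep η) : E ⧸ A) ≤
              Submodule.Quotient.mk (rep ζ) :=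
            le_iff.2 (by
              have hq : (rep ξ ⊔ rep η - rep ζ) ⊔ 0 ≤
                  ((rep ξ - rep ζ) ⊔ 0) + ((rep η - rep ζ) ⊔ 0) := by
                rw [sup_sub, pp_pp_eq_pp']
                exact sup_le (le_add_of_nonneg_right (pp_nonneg' _))
                  (le_add_of_nonneg_left (pp_nonneg' _))
              exact memOfLe (pp_nonneg' _) hq (A.add_mem h1 h2))
          rwa [hrep ζ] at h
        inf := fun ξ η => Submodule.Quotient.mk (rep ξ ⊓ rep η)
        inf_le_left := fun ξ η => by
          have h : (Submodule.Quotient.mk (rep ξ ⊓ rep η) : E ⧸ A) ≤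
              Submodule.Quotient.mk (rep ξ) :=
            le_iff.2 (by
              rw [pp_eq_zero' (sub_nonpos.2 inf_le_left)]
              exact A.zero_mem)
          rwa [hrep ξ] at h
        inf_le_right := fun ξ η => by
          have h : (Submodule.Quotient.mk (rep ξ ⊓ rep η) : E ⧸ A) ≤
              Submodule.Quotient.mk (rep η) :=
            le_iff.2 (by
              rw [pp_eq_zero' (sub_nonpos.2 inf_le_right)]
              exact A.zero_mem)
          rwa [hrep η] at h
        le_inf := fun ξ η ζ h1 h2 => by
          have h : (Submodule.Quotient.mk (rep ξ) : E ⧸ A) ≤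
              Submodule.Quotient.mk (rep η ⊓ rep ζ) :=
            le_iff.2 (by
              have hq : (rep ξ - rep η ⊓ rep ζ) ⊔ 0 ≤
                  ((rep ξ - rep η) ⊔ 0) + ((rep ξ - rep ζ) ⊔ 0) := by
                rw [sub_inf, pp_pp_eq_pp']
                exact sup_le (le_add_of_nonneg_right (pp_nonneg' _))
                  (le_add_of_nonneg_left (pp_nonneg' _))
              exact memOfLe (pp_nonneg' _) hq (A.add_mem h1 h2))
          rwa [hrep ξ] at h }
    letI instCov : CovariantClass (E ⧸ A) (E ⧸ A) (· + ·) (· ≤ ·) := by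
      constructor
      intro ζ ξ η h
      show ζ + ξ ≤ ζ + η
      have hmkadd : ∀ ρ σ : E ⧸ A, ρ + σ = Submodule.Quotient.mk (rep ρ + rep σ) := by
        intro ρ σ
        rw [Submodule.Quotient.mk_add, hrep, hrep]
      rw [hmkadd ζ ξ, hmkadd ζ η]
      refine le_iff.2 ?_
      have he : (rep ζ + rep ξ) - (rep ζ + rep η) = rep ξ - rep η := by abel
      rw [he]
      exact h
    letI instPSM : PosSMulMono ℝ (E ⧸ A) := by
      constructor
      intro c hc ξ η h
      have hmks : ∀ ρ : E ⧸ A, c • ρ = Submodule.Quotient.mk (c • rep ρ) := by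
        intro ρ
        rw [Submodule.Quotient.mk_smul, hrep]
      rw [hmks ξ, hmks η]
      refine le_iff.2 ?_
      have he : c • rep ξ - c • rep η = c • (rep ξ - rep η) := (smul_sub _ _ _).symm
      rw [he, ← smul_pp' hc]
      exact A.smul_mem c h
    have harchQ : ∀ ξ η : E ⧸ A, 0 ≤ ξ → 0 ≤ η → (∀ n : ℕ, n • ξ ≤ η) → ξ = 0 := by
      intro ξ η hξ hη hn
      set xe : E := rep ξ ⊔ 0 with hxe
      set ye : E := rep η ⊔ 0 with hye
      have hx0 : (0 : E) ≤ xe := pp_nonneg' _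
      have hy0 : (0 : E) ≤ ye := pp_nonneg' _
      have hreps : ∀ ρ : E ⧸ A, 0 ≤ ρ →
          Submodule.Quotient.mk (rep ρ ⊔ 0) = ρ := by
        intro ρ hρ
        have h0 : (((0 : E) - rep ρ) ⊔ 0) ∈ A := by
          refine le_iff.1 ?_
          rw [Submodule.Quotient.mk_zero, hrep ρ]
          exact hρ
        rw [zero_sub] at h0
        have h1 : (rep ρ ⊔ 0) - rep ρ ∈ A := by
          have he : (rep ρ ⊔ 0) - rep ρ = (-(rep ρ)) ⊔ 0 := by
            rw [sup_sub, sub_self, zero_sub, sup_comm]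
          rw [he]
          exact h0
        calc Submodule.Quotient.mk (rep ρ ⊔ 0)
            = Submodule.Quotient.mk (rep ρ) := hEq.2 h1
          _ = ρ := hrep ρ
      have hmkx : Submodule.Quotient.mk xe = ξ := hreps ξ hξ
      have hmky : Submodule.Quotient.mk ye = η := hreps η hη
      have haA : ∀ n : ℕ, (((n : ℝ) • xe - ye) ⊔ 0) ∈ A := by
        intro n
        refine le_iff.1 ?_
        rw [Submodule.Quotient.mk_smul, hmkx, hmky, Nat.cast_smul_eq_nsmul]
        exact hn n
      set v : ℕ → E := fun n =>
        xe ⊓ (((n + 1 : ℕ) : ℝ)⁻¹ • ((((n + 1 : ℕ) : ℝ) • xe - ye) ⊔ 0)) with hv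
      have hvmem : ∀ n, v n ∈ A := by
        intro n
        have hcn : (0 : ℝ) < ((n + 1 : ℕ) : ℝ) := by exact_mod_cast Nat.succ_pos n
        refine memOfLe ?_ inf_le_right (A.smul_mem _ (haA (n + 1)))
        exact le_inf hx0 (smul_nonneg (inv_nonneg.2 hcn.le) (pp_nonneg' _))
      have happ : ∀ n : ℕ, |xe - v n| ≤ ((n + 1 : ℕ) : ℝ)⁻¹ • ye := by
        intro n
        have hcn : (0 : ℝ) < ((n + 1 : ℕ) : ℝ) := by exact_mod_cast Nat.succ_pos n
        have h1 : xe - v n =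
            (xe - ((n + 1 : ℕ) : ℝ)⁻¹ • ((((n + 1 : ℕ) : ℝ) • xe - ye) ⊔ 0)) ⊔ 0 :=
          sub_inf_eq_pp' _ _
        have h2 : xe ≤ ((n + 1 : ℕ) : ℝ)⁻¹ •
            (ye + ((((n + 1 : ℕ) : ℝ) • xe - ye) ⊔ 0)) := by
          have h3 : ((n + 1 : ℕ) : ℝ) • xe ≤
              ye + ((((n + 1 : ℕ) : ℝ) • xe - ye) ⊔ 0) :=
            sub_le_iff_le_add'.1 (le_pp' _)
          have h4 := smul_le_smul_of_nonneg_left h3 (inv_nonneg.2 hcn.le)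
          rwa [smul_smul, inv_mul_cancel₀ hcn.ne', one_smul] at h4
        have h5 : xe - ((n + 1 : ℕ) : ℝ)⁻¹ • ((((n + 1 : ℕ) : ℝ) • xe - ye) ⊔ 0) ≤
            ((n + 1 : ℕ) : ℝ)⁻¹ • ye := by
          rw [smul_add] at h2
          exact sub_le_iff_le_add.2 h2
        have h6 : 0 ≤ xe - v n := sub_nonneg.2 inf_le_left
        rw [abs_of_nonneg h6, h1]
        exact sup_le h5 (smul_nonneg (inv_nonneg.2 hcn.le) hy0)
      have hxeA : xe ∈ A := by
        refine hcl v xe hvmem ⟨ye, hy0, ?_⟩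
        intro ε hε
        refine ⟨⌈ε⁻¹⌉₊, fun n hn => ?_⟩
        refine (happ n).trans (smul_le_smul_right'' ?_ hy0)
        have h1 : ε⁻¹ ≤ ((n + 1 : ℕ) : ℝ) := by
          calc ε⁻¹ ≤ (⌈ε⁻¹⌉₊ : ℝ) := Nat.le_ceil _
            _ ≤ ((n : ℕ) : ℝ) := by exact_mod_cast hn
            _ ≤ ((n + 1 : ℕ) : ℝ) := by exact_mod_cast Nat.le_succ n
        calc ((n + 1 : ℕ) : ℝ)⁻¹ ≤ (ε⁻¹)⁻¹ :=
              inv_anti₀ (inv_pos.2 hε) h1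
          _ = ε := inv_inv ε
      rw [← hmkx]
      exact (Submodule.Quotient.mk_eq_zero A).2 hxeA
    have hhom : ∀ a b : E, A.mkQ (a ⊔ b) = A.mkQ a ⊔ A.mkQ b := by
      intro a b
      have hmem : ∀ c : E, c - rep (Submodule.Quotient.mk c) ∈ A := by
        intro c
        have h1 := hEq.1 (hrep (Submodule.Quotient.mk c))
        have h2 := A.neg_mem h1
        rwa [neg_sub] at h2
      show Submodule.Quotient.mk (a ⊔ b) =
        Submodule.Quotient.mk
          (rep (Submodule.Quotient.mk a) ⊔ rep (Submodule.Quotient.mk b))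
      refine hEq.2 ?_
      refine hidl _ (|a - rep (Submodule.Quotient.mk a)| +
        |b - rep (Submodule.Quotient.mk b)|) ?_ ?_
      · exact (abs_sup_sup_le' _ _ _ _).trans_eq
          (abs_of_nonneg (add_nonneg (abs_nonneg _) (abs_nonneg _))).symm
      · refine A.add_mem ?_ ?_
        · exact hidl _ _ (le_of_eq (abs_abs _)) (hmem a)
        · exact hidl _ _ (le_of_eq (abs_abs _)) (hmem b)
    have hdom : ∃ yy : ℕ → E, (∀ n, |x - u n| ≤ yy n) ∧ Antitone yy ∧
        IsGLB (Set.range yy) 0 := by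
      refine ⟨fun n => x - u n,
        fun n => le_of_eq (abs_of_nonneg (sub_nonneg.2 (hlub.1 ⟨n, rfl⟩))),
        fun m n hmn => sub_le_sub_left (humono hmn) _, ?_, ?_⟩
      · rintro t ⟨n, rfl⟩
        exact sub_nonneg.2 (hlub.1 ⟨n, rfl⟩)
      · intro t ht
        have h1 : ∀ n, u n ≤ x - t := by
          intro n
          exact le_sub_comm.1 (ht ⟨n, rfl⟩)
        have h2 : x ≤ x - t := hlub.2 fun r ⟨n, hr⟩ => hr ▸ h1 n
        have h3 := le_sub_comm.1 h2
        rwa [sub_self] at h3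
    obtain ⟨z, hz1, hz2, hz3⟩ := h2 (E ⧸ A) harchQ A.mkQ hhom (fun n => x - u n) hdom
    have hval : ∀ n, A.mkQ (x - u n) = Submodule.Quotient.mk x := by
      intro n
      have h1 : A.mkQ (x - u n) =
          (Submodule.Quotient.mk x : E ⧸ A) - Submodule.Quotient.mk (u n) := by
        rw [map_sub]; rfl
      rw [h1, (Submodule.Quotient.mk_eq_zero A).2 (hu n), sub_zero]
    have hlbz : |(Submodule.Quotient.mk x : E ⧸ A)| ≤ 0 := by
      refine hz3.2 ?_
      rintro t ⟨n, rfl⟩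
      have h1 := hz1 n
      rwa [hval n] at h1
    have habs0 : |(Submodule.Quotient.mk x : E ⧸ A)| = 0 :=
      le_antisymm hlbz (abs_nonneg _)
    have hfin : (Submodule.Quotient.mk x : E ⧸ A) = 0 := by
      refine le_antisymm ((le_abs_self _).trans_eq habs0) ?_
      have h2 : -(Submodule.Quotient.mk x : E ⧸ A) ≤ 0 :=
        (neg_le_abs _).trans_eq habs0
      exact neg_nonpos.1 h2
    exact (Submodule.Quotient.mk_eq_zero A).1 hfin
  tfae_finish
end

section
/- Let E and F be Riesz spaces with F Dedekind complete, let M be a majorizing Riesz subspace of E, and let T : M → F be a Riesz homomorphism. Then T extends to a Riesz homomorphism on all of E; that is, there exists a Riesz homomorphism S : E → F with S(m) = T(m) for every m ∈ M. -/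
set_option linter.unusedSectionVars false

section RieszExtHelpers

variable {F : Type*} [AddCommGroup F] [Lattice F] [CovariantClass F F (· + ·) (· ≤ ·)]

private lemma riesz_neg_le_neg {a b : F} (h : a ≤ b) : -b ≤ -a := by
  have h1 := add_le_add_right (add_le_add_left h (-b)) (-a)
  simpa using h1

private lemma riesz_glb_le_add {A B : Set F} {α β c : F} (hA : IsGLB A α) (hB : IsGLB B β)
    (h : ∀ a ∈ A, ∀ b ∈ B, c ≤ a + b) : c ≤ α + β := by
  have h1 : ∀ a ∈ A, c - β ≤ a := by
    intro a ha
    have h2 : c - a ∈ lowerBounds B := fun b hb => sub_le_iff_le_add'.2 (h a ha b hb)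
    have h3 : c - a ≤ β := hB.2 h2
    exact sub_le_comm.1 h3
  have h4 : c - β ≤ α := hA.2 h1
  exact sub_le_iff_le_add.1 h4

private lemma riesz_glb_le_sup {B : Set F} {β a c : F} (hB : IsGLB B β)
    (h : ∀ b ∈ B, c ≤ a ⊔ b) : c ≤ a ⊔ β := by
  have key : ∀ b ∈ B, c - a + (a ⊓ β) ≤ b := by
    intro b hb
    have h1 : c ≤ a + b - a ⊓ b := by
      have h2 := inf_add_sup a b
      calc c ≤ a ⊔ b := h b hb
        _ = a + b - a ⊓ b := by rw [← h2]; abel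
    have h3 : a ⊓ β ≤ a ⊓ b := inf_le_inf_left a (hB.1 hb)
    calc c - a + (a ⊓ β) ≤ c - a + (a ⊓ b) := add_le_add_right h3 _
      _ ≤ (a + b - a ⊓ b) - a + (a ⊓ b) := add_le_add_left (sub_le_sub_right h1 a) _
      _ = b := by abel
  have h4 : c - a + (a ⊓ β) ≤ β := hB.2 key
  calc c = (c - a + (a ⊓ β)) + (a - a ⊓ β) := by abel
    _ ≤ β + (a - a ⊓ β) := add_le_add_left h4 _
    _ = a + β - a ⊓ β := by abel
    _ = a ⊔ β := by rw [← inf_add_sup a β]; abel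

private lemma riesz_glb_le_sup₂ {A B : Set F} {α β c : F} (hA : IsGLB A α) (hB : IsGLB B β)
    (h : ∀ a ∈ A, ∀ b ∈ B, c ≤ a ⊔ b) : c ≤ α ⊔ β := by
  have h1 : ∀ a ∈ A, c ≤ β ⊔ a := by
    intro a ha
    have h2 : c ≤ a ⊔ β := riesz_glb_le_sup hB (fun b hb => h a ha b hb)
    rwa [sup_comm] at h2
  have h3 : c ≤ β ⊔ α := riesz_glb_le_sup hA h1
  rwa [sup_comm] at h3

private lemma riesz_isGLB_add_const {D : Set F} {d : F} (hD : IsGLB D d) (c : F) :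
    IsGLB ((fun y => y + c) '' D) (d + c) := by
  constructor
  · rintro _ ⟨b, hb, rfl⟩; exact add_le_add_left (hD.1 hb) c
  · intro y hy
    have h1 : y - c ≤ d := hD.2 (fun b hb => sub_le_iff_le_add.2 (hy (Set.mem_image_of_mem _ hb)))
    exact sub_le_iff_le_add.1 h1

private lemma riesz_isGLB_smul [Module ℝ F] [PosSMulMono ℝ F] {D : Set F} {d : F} {c : ℝ}
    (hc : 0 < c) (hD : IsGLB D d) : IsGLB ((fun y => c • y) '' D) (c • d) := by
  constructor
  · rintro _ ⟨b, hb, rfl⟩; exact smul_le_smul_of_nonneg_left (hD.1 hb) hc.le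
  · intro y hy
    have h1 : c⁻¹ • y ≤ d := by
      refine hD.2 (fun b hb => ?_)
      have h2 : y ≤ c • b := hy (Set.mem_image_of_mem _ hb)
      have h3 := smul_le_smul_of_nonneg_left h2 (inv_nonneg.2 hc.le)
      rwa [smul_smul, inv_mul_cancel₀ hc.ne', one_smul] at h3
    have h4 := smul_le_smul_of_nonneg_left h1 hc.le
    rwa [smul_smul, mul_inv_cancel₀ hc.ne', one_smul] at h4

private lemma riesz_isGLB_of_isLUB_neg {D : Set F} {s : F} (hs : IsLUB ((fun y => -y) '' D) s) :
    IsGLB D (-s) := by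
  constructor
  · intro b hb
    have h1 : -b ≤ s := hs.1 (Set.mem_image_of_mem _ hb)
    have h2 := riesz_neg_le_neg h1
    rwa [neg_neg] at h2
  · intro y hy
    have h1 : s ≤ -y := hs.2 (by rintro _ ⟨b, hb, rfl⟩; exact riesz_neg_le_neg (hy hb))
    have h2 := riesz_neg_le_neg h1
    rwa [neg_neg] at h2

end RieszExtHelpers

/-- If `F` is Dedekind complete, `M` is a majorizing Riesz
subspace of `E` and `T : M → F` is a Riesz homomorphism, then `T` extends to a
Riesz homomorphism `S : E → F`. -/
theorem stmt_17 {E F : Type*}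
    [AddCommGroup E] [Lattice E] [Module ℝ E]
    [CovariantClass E E (· + ·) (· ≤ ·)] [PosSMulMono ℝ E]
    [AddCommGroup F] [Lattice F] [Module ℝ F]
    [CovariantClass F F (· + ·) (· ≤ ·)] [PosSMulMono ℝ F]
    -- `F` is Dedekind complete
    (hF : ∀ D : Set F, D.Nonempty → BddAbove D → ∃ s : F, IsLUB D s)
    (M : Submodule ℝ E)
    -- `M` is a Riesz subspace of `E`
    (hMsub : ∀ x ∈ M, ∀ y ∈ M, x ⊔ y ∈ M ∧ x ⊓ y ∈ M)
    -- `M` majorizes `E`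
    (hMmaj : ∀ x : E, ∃ y ∈ M, x ≤ y)
    (T : M →ₗ[ℝ] F)
    -- `T` is a Riesz homomorphism on `M`
    (hT : ∀ (a b : M) (h : (a : E) ⊔ (b : E) ∈ M),
      T ⟨(a : E) ⊔ (b : E), h⟩ = T a ⊔ T b) :
    ∃ S : E →ₗ[ℝ] F, (∀ x y : E, S (x ⊔ y) = S x ⊔ S y) ∧ ∀ m : M, S m = T m := by
  classical
  have hT0 : T 0 = 0 := map_zero T
  -- T is positive
  have hTpos : ∀ y : M, (0:E) ≤ (y:E) → 0 ≤ T y := by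
    intro y hy
    have hyy : ((y:E) ⊔ (((0:M)):E)) = (y:E) := by
      simpa using sup_eq_left.2 (by simpa using hy)
    have hmem : ((y:E) ⊔ (((0:M)):E)) ∈ M := by rw [hyy]; exact y.2
    have h1 := hT y 0 hmem
    have h2 : (⟨(y:E) ⊔ (((0:M)):E), hmem⟩ : M) = y := Subtype.ext hyy
    rw [h2, hT0] at h1
    exact h1 ▸ le_sup_right
  -- GLBs exist in F
  have hGLB : ∀ D : Set F, D.Nonempty → BddBelow D → ∃ s : F, IsGLB D s := by
    intro D hne hbdd
    obtain ⟨lb, hlb⟩ := hbdd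
    obtain ⟨x0, hx0⟩ := hne
    obtain ⟨s, hs⟩ := hF ((fun y => -y) '' D) ⟨-x0, Set.mem_image_of_mem _ hx0⟩
      ⟨-lb, by rintro _ ⟨b, hb, rfl⟩; exact riesz_neg_le_neg (hlb hb)⟩
    exact ⟨-s, riesz_isGLB_of_isLUB_neg hs⟩
  -- the index sets and the sublinear envelope p
  set A : E → Set F := fun x => (fun y : M => T y) '' {y : M | x ≤ (y:E)} with hA
  have hAmem : ∀ (x : E) (y : M), x ≤ (y:E) → T y ∈ A x := fun x y hy => ⟨y, hy, rfl⟩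
  have hAne : ∀ x, (A x).Nonempty := by
    intro x; obtain ⟨y, hyM, hxy⟩ := hMmaj x
    exact ⟨T ⟨y, hyM⟩, hAmem x ⟨y, hyM⟩ hxy⟩
  have hAbdd : ∀ x, BddBelow (A x) := by
    intro x
    obtain ⟨w, hwM, hw⟩ := hMmaj (-x)
    refine ⟨-T ⟨w, hwM⟩, ?_⟩
    rintro _ ⟨y, hy, rfl⟩
    have h0 : (0:E) ≤ (y:E) + w := by
      have h1 := add_le_add hy hw
      simpa using h1
    have h2 : (0:F) ≤ T (y + ⟨w, hwM⟩) := hTpos _ (by simpa using h0)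
    rw [map_add] at h2
    have h3 := add_le_add_right h2 (-T ⟨w, hwM⟩)
    simpa [add_assoc] using h3
  choose p hp using fun x => hGLB (A x) (hAne x) (hAbdd x)
  have hple : ∀ (x : E) (y : M), x ≤ (y:E) → p x ≤ T y := fun x y h => (hp x).1 (hAmem x y h)
  have hp0 : p 0 = 0 := by
    have h1 : IsGLB (A 0) 0 := by
      constructor
      · rintro _ ⟨y, hy, rfl⟩; exact hTpos y hy
      · intro y hy
        have h2 := hy (hAmem 0 0 (by simp))
        simpa [hT0] using h2
    exact (hp 0).unique h1
  have hpneg : ∀ x : E, x ≤ 0 → p x ≤ 0 := by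
    intro x hx
    have h1 := hple x 0 (by simpa using hx)
    simpa [hT0] using h1
  -- the class of admissible sublinear maps
  set P : (E → F) → Prop := fun q =>
    (∀ x y, q (x + y) ≤ q x + q y) ∧
    (∀ c : ℝ, 0 < c → ∀ x, q (c • x) = c • q x) ∧
    q 0 = 0 ∧
    (∀ x, q x ≤ p x) ∧
    (∀ x y, q (x ⊔ y) ≤ q x ⊔ q y) ∧
    (∀ (x : E) (m : M), q (x + (m:E)) = q x + T m) with hPdef
  have hqlb : ∀ q, P q → ∀ x : E, -p (-x) ≤ q x := by
    intro q hq x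
    obtain ⟨h1, h2, h3, h4, h5, h6⟩ := hq
    have h0 : q 0 ≤ q x + q (-x) := by simpa using h1 x (-x)
    rw [h3] at h0
    have h7 : (0:F) ≤ q x + p (-x) := h0.trans (add_le_add_right (h4 (-x)) _)
    have h8 := add_le_add_right h7 (-p (-x))
    simpa [add_assoc] using h8
  -- p itself is admissible
  have hPp : P p := by
    refine ⟨?_, ?_, hp0, fun x => le_rfl, ?_, ?_⟩
    · intro x y
      refine riesz_glb_le_add (hp x) (hp y) ?_
      rintro _ ⟨y1, hy1, rfl⟩ _ ⟨y2, hy2, rfl⟩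
      have h1 : p (x + y) ≤ T (y1 + y2) := hple _ _ (by simpa using add_le_add hy1 hy2)
      rwa [map_add] at h1
    · intro c hc x
      have hset : A (c • x) = (fun y => c • y) '' (A x) := by
        ext z; constructor
        · rintro ⟨y, hy, rfl⟩
          refine ⟨T (c⁻¹ • y), hAmem x (c⁻¹ • y) ?_, ?_⟩
          · have h1 := smul_le_smul_of_nonneg_left hy (inv_nonneg.2 hc.le)
            rw [smul_smul, inv_mul_cancel₀ hc.ne', one_smul] at h1
            simpa using h1
          · show c • T (c⁻¹ • y) = T y
            rw [map_smul, smul_smul, mul_inv_cancel₀ hc.ne', one_smul]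
        · rintro ⟨_, ⟨y, hy, rfl⟩, rfl⟩
          refine ⟨c • y, ?_, by simp⟩
          have h1 := smul_le_smul_of_nonneg_left hy hc.le
          simpa using h1
      have h1 := hp (c • x)
      rw [hset] at h1
      exact h1.unique (riesz_isGLB_smul hc (hp x))
    · intro x y
      refine riesz_glb_le_sup₂ (hp x) (hp y) ?_
      rintro _ ⟨y1, hy1, rfl⟩ _ ⟨y2, hy2, rfl⟩
      have hmem : ((y1:E) ⊔ (y2:E)) ∈ M := (hMsub _ y1.2 _ y2.2).1
      have h1 : p (x ⊔ y) ≤ T ⟨(y1:E) ⊔ (y2:E), hmem⟩ := hple _ _ (sup_le_sup hy1 hy2)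
      rwa [hT y1 y2 hmem] at h1
    · intro x m
      have hset : A (x + (m:E)) = (fun z => z + T m) '' (A x) := by
        ext z; constructor
        · rintro ⟨y, hy, rfl⟩
          refine ⟨T (y - m), hAmem x (y - m) ?_, ?_⟩
          · have h1 : x ≤ (y:E) - (m:E) := le_sub_iff_add_le.2 hy
            simpa using h1
          · show T (y - m) + T m = T y
            rw [map_sub]; abel
        · rintro ⟨_, ⟨y, hy, rfl⟩, rfl⟩
          refine ⟨y + m, ?_, by simp⟩
          simpa using add_le_add_right hy (m:E)
      have h1 := hp (x + (m:E))
      rw [hset] at h1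
      exact h1.unique (riesz_isGLB_add_const (hp x) (T m))
  -- Zorn: get a minimal admissible map
  obtain ⟨q, hqP, hqmin⟩ :
      ∃ q, P q ∧ ∀ q', P q' → (∀ x, q' x ≤ q x) → ∀ x, q x ≤ q' x := by
    have hzorn : ∀ c ⊆ {q : (E → F)ᵒᵈ | P (OrderDual.ofDual q)}, IsChain (· ≤ ·) c →
        ∃ ub ∈ {q : (E → F)ᵒᵈ | P (OrderDual.ofDual q)}, ∀ z ∈ c, z ≤ ub := by
      intro c hcsub hchain
      rcases Set.eq_empty_or_nonempty c with rfl | ⟨q1, hq1⟩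
      · exact ⟨OrderDual.toDual p, hPp, fun z hz => absurd hz (Set.notMem_empty z)⟩
      have hdir : ∀ q ∈ c, ∀ q' ∈ c, ∃ r ∈ c,
          (∀ x, OrderDual.ofDual r x ≤ OrderDual.ofDual q x) ∧
          (∀ x, OrderDual.ofDual r x ≤ OrderDual.ofDual q' x) := by
        intro q hq q' hq'
        by_cases h : q = q'
        · subst h; exact ⟨q, hq, fun x => le_rfl, fun x => le_rfl⟩
        · rcases hchain hq hq' h with h | h
          · exact ⟨q', hq', fun x => h x, fun x => le_rfl⟩
          · exact ⟨q, hq, fun x => le_rfl, fun x => h x⟩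
      have hbb : ∀ x : E, BddBelow ((fun q : E → F => q x) '' (OrderDual.ofDual '' c)) := by
        intro x
        refine ⟨-p (-x), ?_⟩
        rintro _ ⟨q, ⟨q0, hq0, rfl⟩, rfl⟩
        exact hqlb _ (hcsub hq0) x
      have hne : ∀ x : E, ((fun q : E → F => q x) '' (OrderDual.ofDual '' c)).Nonempty :=
        fun x => ⟨OrderDual.ofDual q1 x, ⟨_, ⟨q1, hq1, rfl⟩, rfl⟩⟩
      choose qi hqi using fun x => hGLB _ (hne x) (hbb x)
      have hmemI : ∀ (q0 : (E → F)ᵒᵈ), q0 ∈ c → ∀ x,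
          OrderDual.ofDual q0 x ∈ (fun q : E → F => q x) '' (OrderDual.ofDual '' c) :=
        fun q0 hq0 x => ⟨_, ⟨q0, hq0, rfl⟩, rfl⟩
      refine ⟨OrderDual.toDual qi, ?_, ?_⟩
      · refine ⟨?_, ?_, ?_, ?_, ?_, ?_⟩
        · intro x y
          refine riesz_glb_le_add (hqi x) (hqi y) ?_
          rintro _ ⟨_, ⟨q0, hq0, rfl⟩, rfl⟩ _ ⟨_, ⟨q0', hq0', rfl⟩, rfl⟩
          obtain ⟨r, hr, hrq, hrq'⟩ := hdir q0 hq0 q0' hq0'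
          obtain ⟨ha1, _, _, _, _, _⟩ := hcsub hr
          calc qi (x + y) ≤ OrderDual.ofDual r (x + y) := (hqi _).1 (hmemI r hr _)
            _ ≤ OrderDual.ofDual r x + OrderDual.ofDual r y := ha1 x y
            _ ≤ OrderDual.ofDual q0 x + OrderDual.ofDual q0' y := add_le_add (hrq x) (hrq' y)
        · intro cc hcc x
          have hset : (fun q : E → F => q (cc • x)) '' (OrderDual.ofDual '' c)
              = (fun z => cc • z) '' ((fun q : E → F => q x) '' (OrderDual.ofDual '' c)) := by
            ext z; constructor
            · rintro ⟨_, ⟨q0, hq0, rfl⟩, rfl⟩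
              exact ⟨_, hmemI q0 hq0 x, ((hcsub hq0).2.1 cc hcc x).symm⟩
            · rintro ⟨_, ⟨_, ⟨q0, hq0, rfl⟩, rfl⟩, rfl⟩
              exact ⟨_, ⟨q0, hq0, rfl⟩, (hcsub hq0).2.1 cc hcc x⟩
          have h1 := hqi (cc • x)
          rw [hset] at h1
          exact h1.unique (riesz_isGLB_smul hcc (hqi x))
        · have hset : (fun q : E → F => q 0) '' (OrderDual.ofDual '' c) = {(0:F)} := by
            ext z; simp only [Set.mem_singleton_iff]; constructor
            · rintro ⟨_, ⟨q0, hq0, rfl⟩, rfl⟩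
              exact (hcsub hq0).2.2.1
            · rintro rfl
              exact ⟨_, ⟨q1, hq1, rfl⟩, (hcsub hq1).2.2.1⟩
          have h1 := hqi 0
          rw [hset] at h1
          exact h1.unique isGLB_singleton
        · intro x
          exact ((hqi x).1 (hmemI q1 hq1 x)).trans ((hcsub hq1).2.2.2.1 x)
        · intro x y
          refine riesz_glb_le_sup₂ (hqi x) (hqi y) ?_
          rintro _ ⟨_, ⟨q0, hq0, rfl⟩, rfl⟩ _ ⟨_, ⟨q0', hq0', rfl⟩, rfl⟩
          obtain ⟨r, hr, hrq, hrq'⟩ := hdir q0 hq0 q0' hq0'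
          obtain ⟨_, _, _, _, ha5, _⟩ := hcsub hr
          calc qi (x ⊔ y) ≤ OrderDual.ofDual r (x ⊔ y) := (hqi _).1 (hmemI r hr _)
            _ ≤ OrderDual.ofDual r x ⊔ OrderDual.ofDual r y := ha5 x y
            _ ≤ OrderDual.ofDual q0 x ⊔ OrderDual.ofDual q0' y := sup_le_sup (hrq x) (hrq' y)
        · intro x m
          have hset : (fun q : E → F => q (x + (m:E))) '' (OrderDual.ofDual '' c)
              = (fun z => z + T m) '' ((fun q : E → F => q x) '' (OrderDual.ofDual '' c)) := by
            ext z; constructor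
            · rintro ⟨_, ⟨q0, hq0, rfl⟩, rfl⟩
              exact ⟨_, hmemI q0 hq0 x, ((hcsub hq0).2.2.2.2.2 x m).symm⟩
            · rintro ⟨_, ⟨_, ⟨q0, hq0, rfl⟩, rfl⟩, rfl⟩
              exact ⟨_, ⟨q0, hq0, rfl⟩, (hcsub hq0).2.2.2.2.2 x m⟩
          have h1 := hqi (x + (m:E))
          rw [hset] at h1
          exact h1.unique (riesz_isGLB_add_const (hqi x) (T m))
      · intro z hz
        intro x
        exact (hqi x).1 (hmemI z hz x)
    obtain ⟨m, hm⟩ := zorn_le₀ (α := (E → F)ᵒᵈ) {q | P (OrderDual.ofDual q)} hzorn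
    refine ⟨OrderDual.ofDual m, hm.1, ?_⟩
    intro q' hq' hle x
    have h1 : m ≤ OrderDual.toDual q' := fun z => hle z
    exact hm.2 hq' h1 x
  obtain ⟨hq1, hq2, hq3, hq4, hq5, hq6⟩ := hqP
  have hqs : ∀ t : ℝ, 0 ≤ t → ∀ x : E, q (t • x) = t • q x := by
    intro t ht x
    rcases eq_or_lt_of_le ht with h | h
    · rw [← h]; simp [hq3]
    · exact hq2 t h x
  -- the key inequality, via minimality and a perturbation
  have hkey : ∀ v x : E, q x + q v ≤ q (x + v) := by
    intro v x
    set Dv : E → Set F := fun z => (fun t : ℝ => q (z + t • v) - t • q v) '' {t : ℝ | 0 ≤ t}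
      with hDv
    have hmemD : ∀ (z : E) (t : ℝ), 0 ≤ t → q (z + t • v) - t • q v ∈ Dv z :=
      fun z t ht => ⟨t, ht, rfl⟩
    have hDne : ∀ z, (Dv z).Nonempty := fun z => ⟨_, hmemD z 0 le_rfl⟩
    have hDbb : ∀ z, BddBelow (Dv z) := by
      intro z
      refine ⟨-p (-z), ?_⟩
      rintro _ ⟨t, (ht : (0:ℝ) ≤ t), rfl⟩
      dsimp only
      have h1 : q (t • v) ≤ q (z + t • v) + q (-z) := by
        have h2 := hq1 (z + t • v) (-z)
        rwa [show z + t • v + -z = t • v from by abel] at h2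
      rw [hqs t ht v] at h1
      have h2 : -q (-z) ≤ q (z + t • v) - t • q v := by
        have h3 := sub_le_sub_right h1 (t • q v + q (-z))
        calc -q (-z) = t • q v - (t • q v + q (-z)) := by abel
          _ ≤ (q (z + t • v) + q (-z)) - (t • q v + q (-z)) := h3
          _ = q (z + t • v) - t • q v := by abel
      exact (riesz_neg_le_neg (hq4 (-z))).trans h2
    choose r hrGLB using fun z => hGLB (Dv z) (hDne z) (hDbb z)
    have hel_mono : ∀ (z : E) (s t : ℝ), 0 ≤ s → s ≤ t →
        q (z + t • v) - t • q v ≤ q (z + s • v) - s • q v := by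
      intro z s t hs hst
      have h1 : q (z + t • v) ≤ q (z + s • v) + q ((t - s) • v) := by
        have h2 := hq1 (z + s • v) ((t - s) • v)
        rwa [show z + s • v + (t - s) • v = z + t • v from by module] at h2
      rw [hqs (t - s) (by linarith) v] at h1
      calc q (z + t • v) - t • q v ≤ (q (z + s • v) + (t - s) • q v) - t • q v :=
            sub_le_sub_right h1 _
        _ = q (z + s • v) - s • q v := by rw [sub_smul]; abel
    have hrleq : ∀ z, r z ≤ q z := by
      intro z
      have h1 := (hrGLB z).1 (hmemD z 0 le_rfl)
      simpa using h1
    have hrP : P r := by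
      refine ⟨?_, ?_, ?_, ?_, ?_, ?_⟩
      · intro x' y'
        refine riesz_glb_le_add (hrGLB x') (hrGLB y') ?_
        rintro _ ⟨t, (ht : (0:ℝ) ≤ t), rfl⟩ _ ⟨s, (hs : (0:ℝ) ≤ s), rfl⟩
        dsimp only
        have h1 : r (x' + y') ≤ q (x' + y' + (t + s) • v) - (t + s) • q v :=
          (hrGLB _).1 (hmemD _ (t + s) (by linarith))
        have h2 : q (x' + y' + (t + s) • v) ≤ q (x' + t • v) + q (y' + s • v) := by
          have h3 := hq1 (x' + t • v) (y' + s • v)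
          rwa [show x' + t • v + (y' + s • v) = x' + y' + (t + s) • v from by module] at h3
        calc r (x' + y') ≤ q (x' + y' + (t + s) • v) - (t + s) • q v := h1
          _ ≤ (q (x' + t • v) + q (y' + s • v)) - (t + s) • q v := sub_le_sub_right h2 _
          _ = (q (x' + t • v) - t • q v) + (q (y' + s • v) - s • q v) := by
              rw [add_smul]; abel
      · intro cc hcc z
        have hset : Dv (cc • z) = (fun w => cc • w) '' Dv z := by
          ext w; constructor
          · rintro ⟨t, (ht : (0:ℝ) ≤ t), rfl⟩
            dsimp only
            refine ⟨q (z + (t / cc) • v) - (t / cc) • q v, hmemD z (t / cc) (by positivity), ?_⟩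
            show cc • (q (z + (t / cc) • v) - (t / cc) • q v) = q (cc • z + t • v) - t • q v
            have e1 : cc • (z + (t / cc) • v) = cc • z + t • v := by
              rw [smul_add, smul_smul, mul_comm, div_mul_cancel₀ _ (ne_of_gt hcc)]
            rw [smul_sub, ← hq2 cc hcc, e1, smul_smul, mul_comm cc (t / cc),
              div_mul_cancel₀ _ (ne_of_gt hcc)]
          · rintro ⟨_, ⟨t, (ht : (0:ℝ) ≤ t), rfl⟩, rfl⟩
            dsimp only
            refine ⟨cc * t, mul_nonneg hcc.le ht, ?_⟩
            show q (cc • z + (cc * t) • v) - (cc * t) • q v = cc • (q (z + t • v) - t • q v)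
            have e1 : cc • z + (cc * t) • v = cc • (z + t • v) := by
              rw [smul_add, smul_smul]
            rw [e1, hq2 cc hcc, smul_sub, smul_smul]
        have h1 := hrGLB (cc • z)
        rw [hset] at h1
        exact h1.unique (riesz_isGLB_smul hcc (hrGLB z))
      · have hset : Dv 0 = {(0:F)} := by
          ext w; simp only [Set.mem_singleton_iff]; constructor
          · rintro ⟨t, (ht : (0:ℝ) ≤ t), rfl⟩
            dsimp only
            rw [show (0:E) + t • v = t • v from zero_add _, hqs t ht v, sub_self]
          · rintro rfl
            have h0 : q ((0:E) + (0:ℝ) • v) - (0:ℝ) • q v = 0 := by simp [hq3]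
            exact h0 ▸ hmemD 0 0 le_rfl
        have h1 := hrGLB 0
        rw [hset] at h1
        exact h1.unique isGLB_singleton
      · intro z
        exact (hrleq z).trans (hq4 z)
      · intro x' y'
        refine riesz_glb_le_sup₂ (hrGLB x') (hrGLB y') ?_
        rintro _ ⟨t, (ht : (0:ℝ) ≤ t), rfl⟩ _ ⟨s, (hs : (0:ℝ) ≤ s), rfl⟩
        dsimp only
        set u := max t s with hu
        have hu0 : 0 ≤ u := le_trans ht (le_max_left t s)
        have h1 : r (x' ⊔ y') ≤ q (x' ⊔ y' + u • v) - u • q v := (hrGLB _).1 (hmemD _ u hu0)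
        have h2 : x' ⊔ y' + u • v = (x' + u • v) ⊔ (y' + u • v) := sup_add x' y' (u • v)
        have h3 : q ((x' + u • v) ⊔ (y' + u • v)) ≤ q (x' + u • v) ⊔ q (y' + u • v) := hq5 _ _
        have h4 : (q (x' + u • v) ⊔ q (y' + u • v)) - u • q v
            = (q (x' + u • v) - u • q v) ⊔ (q (y' + u • v) - u • q v) := by
          rw [sub_eq_add_neg, sub_eq_add_neg, sub_eq_add_neg, sup_add]
        calc r (x' ⊔ y') ≤ q (x' ⊔ y' + u • v) - u • q v := h1
          _ ≤ (q (x' + u • v) ⊔ q (y' + u • v)) - u • q v := by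
              rw [h2]; exact sub_le_sub_right h3 _
          _ = (q (x' + u • v) - u • q v) ⊔ (q (y' + u • v) - u • q v) := h4
          _ ≤ (q (x' + t • v) - t • q v) ⊔ (q (y' + s • v) - s • q v) :=
              sup_le_sup (hel_mono x' t u ht (le_max_left t s))
                (hel_mono y' s u hs (le_max_right t s))
      · intro x' m
        have hset : Dv (x' + (m:E)) = (fun w => w + T m) '' Dv x' := by
          ext w; constructor
          · rintro ⟨t, (ht : (0:ℝ) ≤ t), rfl⟩
            dsimp only
            refine ⟨_, hmemD x' t ht, ?_⟩
            rw [show x' + (m:E) + t • v = x' + t • v + (m:E) from by abel, hq6 (x' + t • v) m]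
            abel
          · rintro ⟨_, ⟨t, (ht : (0:ℝ) ≤ t), rfl⟩, rfl⟩
            dsimp only
            refine ⟨t, ht, ?_⟩
            show q (x' + (m:E) + t • v) - t • q v = q (x' + t • v) - t • q v + T m
            rw [show x' + (m:E) + t • v = x' + t • v + (m:E) from by abel, hq6 (x' + t • v) m]
            abel
        have h1 := hrGLB (x' + (m:E))
        rw [hset] at h1
        exact h1.unique (riesz_isGLB_add_const (hrGLB x') (T m))
    have hmin := hqmin r hrP hrleq
    have h1 : q x ≤ q (x + (1:ℝ) • v) - (1:ℝ) • q v :=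
      (hmin x).trans ((hrGLB x).1 (hmemD x 1 zero_le_one))
    rw [one_smul, one_smul] at h1
    have h2 := add_le_add_left h1 (q v)
    calc q x + q v ≤ (q (x + v) - q v) + q v := h2
      _ = q (x + v) := by abel
  have hadd : ∀ x y : E, q (x + y) = q x + q y := fun x y =>
    le_antisymm (hq1 x y) (hkey y x)
  have hneg : ∀ x : E, q (-x) = -q x := by
    intro x
    have h0 : q x + q (-x) = 0 := by
      rw [← hadd]
      simpa using hq3
    exact eq_neg_of_add_eq_zero_right h0
  have hsmul : ∀ (c : ℝ) (x : E), q (c • x) = c • q x := by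
    intro c x
    rcases lt_trichotomy c 0 with h | h | h
    · rw [show c • x = -((-c) • x) from by rw [neg_smul, neg_neg], hneg,
        hq2 (-c) (by linarith), neg_smul, neg_neg]
    · subst h; simp [hq3]
    · exact hq2 c h x
  have hpos : ∀ z : E, 0 ≤ z → 0 ≤ q z := by
    intro z hz
    have h1 : q (-z) ≤ p (-z) := hq4 _
    have h2 : p (-z) ≤ 0 := hpneg _ (by simpa using riesz_neg_le_neg hz)
    have h3 : q (-z) ≤ 0 := h1.trans h2
    rw [hneg] at h3
    have h4 := riesz_neg_le_neg h3
    simpa using h4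
  refine ⟨{ toFun := q, map_add' := hadd, map_smul' := by intro c x; simpa using hsmul c x },
    ?_, ?_⟩
  · intro x y
    refine le_antisymm (hq5 x y) ?_
    have hmono : ∀ a b : E, a ≤ b → q a ≤ q b := by
      intro a b hab
      have h1 : 0 ≤ q (b - a) := hpos _ (sub_nonneg.2 hab)
      have h2 : q b = q (b - a) + q a := by rw [← hadd]; congr 1; abel
      calc q a = 0 + q a := (zero_add _).symm
        _ ≤ q (b - a) + q a := add_le_add_left h1 _
        _ = q b := h2.symm
    exact sup_le (hmono x _ le_sup_left) (hmono y _ le_sup_right)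
  · intro m
    have h1 := hq6 0 m
    simpa [hq3] using h1
end

section
/- Let E, H and F be Riesz spaces with F Dedekind complete, let Q : E → H be a Riesz homomorphism, let S : H → F be a positive linear operator, and let T : E → F be a positive linear operator such that T(x) ≤ S(Q(x)) for every x ∈ E with x ≥ 0. Then T admits a factorization T = S₁ ∘ Q, where S₁ : H → F is a linear operator with 0 ≤ S₁ ≤ S (i.e., 0 ≤ S₁(y) ≤ S(y) for every y ∈ H with y ≥ 0). -/
open Set LinearMap Submodule

section HB

variable {H F : Type*}
  [AddCommGroup H] [Module ℝ H]
  [AddCommGroup F] [Lattice F] [Module ℝ F]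
  [CovariantClass F F (· + ·) (· ≤ ·)] [PosSMulMono ℝ F]

/-- One-step extension for vector-valued Hahn-Banach. -/
theorem hb_step (hF : ∀ D : Set F, D.Nonempty → BddAbove D → ∃ s : F, IsLUB D s)
    (p : H → F) (p_add : ∀ a b, p (a + b) ≤ p a + p b)
    (p_smul : ∀ t : ℝ, 0 < t → ∀ y, p (t • y) = t • p y)
    (f : H →ₗ.[ℝ] F) (hf : ∀ x : f.domain, f x ≤ p x) (hdom : f.domain ≠ ⊤) :
    ∃ g, f < g ∧ ∀ x : g.domain, g x ≤ p x := by
  obtain ⟨y, -, hy⟩ : ∃ y ∈ (⊤ : Submodule ℝ H), y ∉ f.domain :=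
    SetLike.exists_of_lt (lt_top_iff_ne_top.2 hdom)
  have key : ∀ x x' : f.domain, f x - p ((x : H) - y) ≤ p ((x' : H) + y) - f x' := by
    intro x x'
    rw [sub_le_sub_iff]
    have h1 : f x + f x' = f (x + x') := (f.map_add x x').symm
    have h2 : f (x + x') ≤ p ((x : H) + (x' : H)) := hf (x + x')
    have h3 : p ((x : H) + (x' : H)) ≤ p ((x' : H) + y) + p ((x : H) - y) := by
      have : (x : H) + (x' : H) = ((x' : H) + y) + ((x : H) - y) := by abel
      rw [this]; exact p_add _ _
    calc f x + f x' = f (x + x') := h1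
      _ ≤ _ := h2
      _ ≤ _ := h3
  set D : Set F := range fun x : f.domain => f x - p ((x : H) - y) with hD
  obtain ⟨c, hc⟩ : ∃ c : F, IsLUB D c := by
    refine hF D ⟨f 0 - p ((0 : f.domain) - y), ⟨0, rfl⟩⟩ ⟨p ((0 : H) + y) - f 0, ?_⟩
    rintro v ⟨x, rfl⟩
    exact key x 0
  have le_c : ∀ x : f.domain, f x - p ((x : H) - y) ≤ c := fun x => hc.1 ⟨x, rfl⟩
  have c_le : ∀ x : f.domain, c ≤ p ((x : H) + y) - f x := by
    intro x
    refine hc.2 ?_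
    rintro v ⟨x', rfl⟩
    exact key x' x
  refine ⟨f.supSpanSingleton y c hy, ?_, ?_⟩
  · refine lt_iff_le_not_ge.2 ⟨f.left_le_sup _ _, fun Hle => ?_⟩
    replace Hle := LinearPMap.domain_mono.monotone Hle
    rw [LinearPMap.domain_supSpanSingleton, sup_le_iff, span_le, singleton_subset_iff] at Hle
    exact hy Hle.2
  · rintro ⟨z, hz⟩
    rcases mem_sup.1 hz with ⟨x, hx, y', hy', rfl⟩
    rcases mem_span_singleton.1 hy' with ⟨r, rfl⟩
    rw [LinearPMap.supSpanSingleton_apply_mk _ _ _ _ _ hx]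
    rcases lt_trichotomy r 0 with hr | hr | hr
    · -- r < 0
      set t : ℝ := -r with ht
      have ht0 : 0 < t := neg_pos.2 hr
      have h1 : f (t⁻¹ • ⟨x, hx⟩) - p ((t⁻¹ • x : H) - y) ≤ c := le_c (t⁻¹ • ⟨x, hx⟩)
      have h2 := smul_le_smul_of_nonneg_left h1 ht0.le
      rw [smul_sub, f.map_smul, smul_smul, mul_inv_cancel₀ ht0.ne', one_smul,
        ← p_smul t ht0, smul_sub, smul_smul, mul_inv_cancel₀ ht0.ne', one_smul] at h2
      have h3 : t • y = -(r • y) := by rw [ht, neg_smul]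
      rw [h3, sub_neg_eq_add] at h2
      -- h2 : f ⟨x,hx⟩ - p (x + r • y) ≤ t • c
      have h4 : t • c = -(r • c) := by rw [ht, neg_smul]
      rw [h4, sub_le_iff_le_add] at h2
      -- h2 : f ⟨x,hx⟩ ≤ -(r • c) + p (x + r • y)
      calc f ⟨x, hx⟩ + r • c ≤ (-(r • c) + p (x + r • y)) + r • c := add_le_add_left h2 _
        _ = p (x + r • y) := by abel
    · subst hr
      simp only [RingHom.id_apply, zero_smul, add_zero]
      exact hf ⟨x, hx⟩
    · -- r > 0
      have h1 : c ≤ p ((r⁻¹ • x : H) + y) - f (r⁻¹ • ⟨x, hx⟩) := c_le (r⁻¹ • ⟨x, hx⟩)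
      have h2 := smul_le_smul_of_nonneg_left h1 hr.le
      rw [smul_sub, f.map_smul, smul_smul, mul_inv_cancel₀ hr.ne', one_smul,
        ← p_smul r hr, smul_add, smul_smul, mul_inv_cancel₀ hr.ne', one_smul] at h2
      -- h2 : r • c ≤ p (x + r • y) - f ⟨x,hx⟩
      rw [le_sub_iff_add_le] at h2
      calc f ⟨x, hx⟩ + r • c = r • c + f ⟨x, hx⟩ := add_comm _ _
        _ ≤ p (x + r • y) := h2

/-- Vector-valued Hahn-Banach extension theorem into a Dedekind complete space. -/
theorem hb_ext (hF : ∀ D : Set F, D.Nonempty → BddAbove D → ∃ s : F, IsLUB D s)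
    (p : H → F) (p_add : ∀ a b, p (a + b) ≤ p a + p b)
    (p_smul : ∀ t : ℝ, 0 < t → ∀ y, p (t • y) = t • p y)
    (f : H →ₗ.[ℝ] F) (hf : ∀ x : f.domain, f x ≤ p x) :
    ∃ g : H →ₗ[ℝ] F, (∀ x : f.domain, g x = f x) ∧ ∀ x, g x ≤ p x := by
  set S := { f : H →ₗ.[ℝ] F | ∀ x : f.domain, f x ≤ p x }
  have hSc : ∀ c, c ⊆ S → IsChain (· ≤ ·) c → ∀ y ∈ c, ∃ ub ∈ S, ∀ z ∈ c, z ≤ ub := by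
    intro c hcs c_chain y hy
    have cne : c.Nonempty := ⟨y, hy⟩
    have hcd : DirectedOn (· ≤ ·) c := c_chain.directedOn
    refine ⟨LinearPMap.sSup c hcd, ?_, fun _ => LinearPMap.le_sSup hcd⟩
    rintro ⟨x, hx⟩
    have hdir : DirectedOn (· ≤ ·) (LinearPMap.domain '' c) :=
      directedOn_image.2 (hcd.mono LinearPMap.domain_mono.monotone)
    rcases (mem_sSup_of_directed (cne.image _) hdir).1 hx with ⟨_, ⟨f', hfc, rfl⟩, hfx⟩
    have hle : f' ≤ LinearPMap.sSup c hcd := LinearPMap.le_sSup _ hfc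
    calc (LinearPMap.sSup c hcd) ⟨x, hx⟩ = f' ⟨x, hfx⟩ := (hle.2 rfl).symm
      _ ≤ p x := hcs hfc ⟨x, hfx⟩
  obtain ⟨q, hpq, hq⟩ := zorn_le_nonempty₀ S hSc f hf
  have hqtop : q.domain = ⊤ := by
    by_contra hqd
    rcases hb_step hF p p_add p_smul q hq.prop hqd with ⟨r, hqr, hr⟩
    exact hqr.ne (le_antisymm hqr.le (hq.2 hr hqr.le))
  refine ⟨(q.toFun).comp (LinearMap.id.codRestrict q.domain fun x => hqtop ▸ trivial), ?_, ?_⟩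
  · intro x
    have := hpq.2 (x := x) (y := ⟨(x : H), hqtop ▸ trivial⟩) rfl
    exact this.symm
  · intro x
    exact hq.prop ⟨x, hqtop ▸ trivial⟩

end HB

/-- Let `E, H, F` be Riesz spaces with `F` Dedekind complete,
`Q : E → H` a Riesz homomorphism, `S : H → F` a positive operator and
`T : E → F` a positive operator with `T x ≤ S (Q x)` for all `x ≥ 0`.  Then
`T = S₁ ∘ Q` for some linear operator `S₁ : H → F` with `0 ≤ S₁ ≤ S`. -/
theorem stmt_19 {E H F : Type*}
    [AddCommGroup E] [Lattice E] [Module ℝ E]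
    [CovariantClass E E (· + ·) (· ≤ ·)] [PosSMulMono ℝ E]
    [AddCommGroup H] [Lattice H] [Module ℝ H]
    [CovariantClass H H (· + ·) (· ≤ ·)] [PosSMulMono ℝ H]
    [AddCommGroup F] [Lattice F] [Module ℝ F]
    [CovariantClass F F (· + ·) (· ≤ ·)] [PosSMulMono ℝ F]
    -- `F` is Dedekind complete
    (hF : ∀ D : Set F, D.Nonempty → BddAbove D → ∃ s : F, IsLUB D s)
    (Q : E →ₗ[ℝ] H) (hQ : ∀ x y : E, Q (x ⊔ y) = Q x ⊔ Q y)
    (S : H →ₗ[ℝ] F) (hS : ∀ y : H, 0 ≤ y → 0 ≤ S y)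
    (T : E →ₗ[ℝ] F) (hTpos : ∀ x : E, 0 ≤ x → 0 ≤ T x)
    (hTS : ∀ x : E, 0 ≤ x → T x ≤ S (Q x)) :
    ∃ S₁ : H →ₗ[ℝ] F, (∀ x : E, T x = S₁ (Q x)) ∧
      ∀ y : H, 0 ≤ y → 0 ≤ S₁ y ∧ S₁ y ≤ S y := by
  classical
  -- S is monotone
  have Smono : ∀ a b : H, a ≤ b → S a ≤ S b := by
    intro a b hab
    have := hS (b - a) (by rwa [sub_nonneg])
    rw [map_sub, sub_nonneg] at this
    exact this
  -- scalar multiplication distributes over sup in H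
  have smul_sup' : ∀ t : ℝ, 0 < t → ∀ a b : H, t • (a ⊔ b) = t • a ⊔ t • b := by
    intro t ht a b
    apply le_antisymm
    · have h : a ⊔ b ≤ t⁻¹ • (t • a ⊔ t • b) := by
        refine sup_le ?_ ?_
        · have : t⁻¹ • (t • a) ≤ t⁻¹ • (t • a ⊔ t • b) :=
            smul_le_smul_of_nonneg_left le_sup_left (inv_pos.2 ht).le
          rwa [smul_smul, inv_mul_cancel₀ ht.ne', one_smul] at this
        · have : t⁻¹ • (t • b) ≤ t⁻¹ • (t • a ⊔ t • b) :=
            smul_le_smul_of_nonneg_left le_sup_right (inv_pos.2 ht).le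
          rwa [smul_smul, inv_mul_cancel₀ ht.ne', one_smul] at this
      have := smul_le_smul_of_nonneg_left h ht.le
      rwa [smul_smul, mul_inv_cancel₀ ht.ne', one_smul] at this
    · exact sup_le (smul_le_smul_of_nonneg_left le_sup_left ht.le)
        (smul_le_smul_of_nonneg_left le_sup_right ht.le)
  -- the sublinear dominating function
  set p : H → F := fun y => S (y ⊔ 0) with hp
  have p_add : ∀ a b : H, p (a + b) ≤ p a + p b := by
    intro a b
    have h : (a + b) ⊔ 0 ≤ (a ⊔ 0) + (b ⊔ 0) := by
      refine sup_le (add_le_add le_sup_left le_sup_left) ?_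
      calc (0 : H) = 0 + 0 := (add_zero 0).symm
        _ ≤ (a ⊔ 0) + (b ⊔ 0) := add_le_add le_sup_right le_sup_right
    calc p (a + b) ≤ S ((a ⊔ 0) + (b ⊔ 0)) := Smono _ _ h
      _ = p a + p b := by rw [map_add]
  have p_smul : ∀ t : ℝ, 0 < t → ∀ y : H, p (t • y) = t • p y := by
    intro t ht y
    have : (t • y) ⊔ 0 = t • (y ⊔ 0) := by
      rw [smul_sup' t ht y 0, smul_zero]
    rw [hp]; dsimp only; rw [this, map_smul]
  -- T vanishes on ker Q
  have hTzero : ∀ x : E, 0 ≤ x → Q x = 0 → T x = 0 := by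
    intro x hx hQx
    refine le_antisymm ?_ (hTpos x hx)
    have := hTS x hx
    rwa [hQx, map_zero] at this
  have hker : LinearMap.ker Q ≤ LinearMap.ker T := by
    intro x hx
    rw [LinearMap.mem_ker] at hx ⊢
    have hxd : x = (x ⊔ 0) - ((-x) ⊔ 0) := by
      rw [eq_sub_iff_add_eq]
      calc x + ((-x) ⊔ 0) = (x + -x) ⊔ (x + 0) := by rw [add_sup]
        _ = x ⊔ 0 := by rw [add_neg_cancel, add_zero, sup_comm]
    have h1 : T (x ⊔ 0) = 0 := by
      refine hTzero _ le_sup_right ?_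
      rw [hQ x 0, hx, map_zero, sup_idem]
    have h2 : T ((-x) ⊔ 0) = 0 := by
      refine hTzero _ le_sup_right ?_
      rw [hQ (-x) 0, map_neg, hx, neg_zero, map_zero, sup_idem]
    rw [hxd, map_sub, h1, h2, sub_zero]
  -- factor T through range Q
  set Tbar : (E ⧸ LinearMap.ker Q) →ₗ[ℝ] F := (LinearMap.ker Q).liftQ T hker with hTbar
  set S₀ : LinearMap.range Q →ₗ[ℝ] F :=
    Tbar.comp Q.quotKerEquivRange.symm.toLinearMap with hS₀
  have hS₀Q : ∀ x : E, S₀ ⟨Q x, LinearMap.mem_range_self Q x⟩ = T x := by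
    intro x
    rw [hS₀]
    simp only [LinearMap.comp_apply, LinearEquiv.coe_toLinearMap]
    rw [Q.quotKerEquivRange_symm_apply_image x (LinearMap.mem_range_self Q x)]
    rw [hTbar]
    exact Submodule.liftQ_apply _ T x
  -- the initial partial map
  set f₀ : H →ₗ.[ℝ] F := ⟨LinearMap.range Q, S₀⟩ with hf₀
  have hf₀dom : ∀ z : f₀.domain, f₀ z ≤ p (z : H) := by
    rintro ⟨z, hz⟩
    obtain ⟨x, rfl⟩ := hz
    have h1 : f₀ ⟨Q x, LinearMap.mem_range_self Q x⟩ = T x := hS₀Q x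
    rw [h1]
    have h2 : T x ≤ T (x ⊔ 0) := by
      have h0 : (0 : F) ≤ T (x ⊔ 0 - x) := hTpos _ (by rw [sub_nonneg]; exact le_sup_left)
      rwa [map_sub, sub_nonneg] at h0
    have h3 : T (x ⊔ 0) ≤ S (Q (x ⊔ 0)) := hTS _ le_sup_right
    have h4 : Q (x ⊔ 0) = Q x ⊔ 0 := by rw [hQ x 0, map_zero]
    calc T x ≤ T (x ⊔ 0) := h2
      _ ≤ S (Q (x ⊔ 0)) := h3
      _ = p (Q x) := by rw [h4]
  obtain ⟨g, hg1, hg2⟩ := hb_ext hF p p_add p_smul f₀ hf₀dom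
  refine ⟨g, ?_, ?_⟩
  · intro x
    have h := hg1 ⟨Q x, LinearMap.mem_range_self Q x⟩
    have h2 : (f₀ ⟨Q x, LinearMap.mem_range_self Q x⟩ : F) = T x := hS₀Q x
    exact (h.trans h2).symm
  · intro y hy
    constructor
    · have h1 : g (-y) ≤ p (-y) := hg2 (-y)
      have h2 : p (-y) = 0 := by
        rw [hp]; dsimp only
        rw [sup_eq_right.2 (neg_nonpos.mpr hy), map_zero]
      rw [map_neg, h2] at h1
      rwa [neg_nonpos] at h1
    · have h1 : g y ≤ p y := hg2 y
      have h2 : p y = S y := by rw [hp]; dsimp only; rw [sup_eq_left.2 hy]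
      rwa [h2] at h1
end
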